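/- arXiv:2211.01826 — 4 statements merged into one kernel-verified Lean document; each statement's English description precedes it below -/
import Mathlib

section
/- A lens is a monomorphism in the category Lens if and only if its get functor is a cosieve; moreover every cosieve is the get functor of exactly one lens, so the forgetful functor U : Lens → Cat restricts to a bijection between monic lenses and cosieves. -/
universe u

open CategoryTheory CategoryTheory.Limits

namespace LensPaper

section OutDefs

variable {A : Type*} [Category A] {B : Type*} [Category B] {C : Type*} [Category C]

/-- The "out-set" of an object: the collection of all morphisms out of `X`,
bundled with their targets. -/
def Out (X : A) : Type _ := Σ Y : A, X ⟶ Y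

/-- The identity element of an out-set. -/
def Out.id (X : A) : Out X := ⟨X, 𝟙 X⟩

/-- Composition of a morphism out of `X` with a morphism out of its target. -/
def Out.comp {X : A} (u : Out X) (v : Out u.1) : Out X := ⟨v.1, u.2 ≫ v.2⟩

/-- Transport of out-sets along an equality of objects. -/
def Out.cast {X Y : A} (h : X = Y) (u : Out X) : Out Y := ⟨u.1, eqToHom h.symm ≫ u.2⟩

@[simp] theorem Out.cast_rfl {X : A} (u : Out X) : Out.cast rfl u = u := by
  cases u; simp [Out.cast]; rfl

theorem Out.cast_cast {X Y Z : A} (h₁ : X = Y) (h₂ : Y = Z) (u : Out X) :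
    Out.cast h₂ (Out.cast h₁ u) = Out.cast (h₁.trans h₂) u := by
  subst h₁; subst h₂; simp

/-- The action of a functor on out-sets. -/
def mapOut (F : A ⥤ B) {X : A} (u : Out X) : Out (F.obj X) := ⟨F.obj u.1, F.map u.2⟩

theorem mapOut_cast (F : A ⥤ B) {X Y : A} (h : X = Y) (u : Out X) :
    mapOut F (Out.cast h u) = Out.cast (congrArg F.obj h) (mapOut F u) := by
  subst h; simp

/-- The set of all morphisms of a category, bundled with their endpoints. -/
def Mor (A : Type*) [Category A] : Type _ := Σ (X Y : A), X ⟶ Y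

/-- The action of a functor on morphisms, as a function on bundled morphisms. -/
def mapMor (F : A ⥤ B) : Mor A → Mor B := fun m => ⟨F.obj m.1, F.obj m.2.1, F.map m.2.2⟩

/-- The set of composable pairs of morphisms of a category. -/
def CompPair (A : Type*) [Category A] : Type _ := Σ (X Y Z : A), (X ⟶ Y) × (Y ⟶ Z)

/-- The action of a functor on composable pairs. -/
def mapCompPair (F : A ⥤ B) : CompPair A → CompPair B :=
  fun p => ⟨F.obj p.1, F.obj p.2.1, F.obj p.2.2.1, (F.map p.2.2.2.1, F.map p.2.2.2.2)⟩

/-- A functor is a discrete opfibration if every morphism out of `F.obj X`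
has a unique lift to a morphism out of `X`. -/
def IsDiscreteOpfibration (F : A ⥤ B) : Prop :=
  ∀ (X : A) (u : Out (F.obj X)), ∃! v : Out X, mapOut F v = u

/-- A cosieve is an injective-on-objects discrete opfibration. -/
def IsCosieve (F : A ⥤ B) : Prop :=
  IsDiscreteOpfibration F ∧ Function.Injective F.obj

end OutDefs

/-- An (asymmetric delta) lens: a get functor together with put functions
satisfying PutGet, PutId and PutPut. -/
structure DLens (A : Type*) (B : Type*) [Category A] [Category B] where
  get : A ⥤ B
  put : ∀ (X : A), Out (get.obj X) → Out X
  putGet : ∀ (X : A) (u : Out (get.obj X)), mapOut get (put X u) = u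
  putId : ∀ (X : A), put X (Out.id (get.obj X)) = Out.id X
  putPut : ∀ (X : A) (u : Out (get.obj X)) (v : Out u.1) (h : u.1 = get.obj (put X u).1),
      put X (u.comp v) = (put X u).comp (put (put X u).1 (Out.cast h v))

namespace DLens

variable {A : Type*} [Category A] {B : Type*} [Category B] {C : Type*} [Category C]

theorem put_cast (F : DLens A B) {X₁ X₂ : A} (e : X₁ = X₂) (u : Out (F.get.obj X₁)) :
    Out.cast e (F.put X₁ u) = F.put X₂ (Out.cast (congrArg F.get.obj e) u) := by
  subst e; simp

/-- The identity lens. -/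
def id (A : Type*) [Category A] : DLens A A where
  get := Functor.id A
  put X u := u
  putGet X u := rfl
  putId X := rfl
  putPut X u v h := by
    have hv : Out.cast h v = v := Out.cast_rfl v
    rw [hv]

/-- Composition of lenses. -/
def comp (F : DLens A B) (G : DLens B C) : DLens A C where
  get := F.get ⋙ G.get
  put X u := F.put X (G.put (F.get.obj X) u)
  putGet X u := by
    show mapOut G.get (mapOut F.get (F.put X (G.put (F.get.obj X) u))) = u
    rw [F.putGet, G.putGet]
  putId X := by
    show F.put X (G.put (F.get.obj X) (Out.id (G.get.obj (F.get.obj X)))) = Out.id X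
    rw [G.putId, F.putId]
  putPut X u v h := by
    have h₁ : u.1 = G.get.obj (G.put (F.get.obj X) u).1 :=
      (congrArg Sigma.fst (G.putGet (F.get.obj X) u)).symm
    show F.put X (G.put (F.get.obj X) (u.comp v)) = _
    rw [G.putPut (F.get.obj X) u v h₁]
    have h₂ : (G.put (F.get.obj X) u).1 =
        F.get.obj (F.put X (G.put (F.get.obj X) u)).1 :=
      (congrArg Sigma.fst (F.putGet X (G.put (F.get.obj X) u))).symm
    rw [F.putPut X (G.put (F.get.obj X) u) _ h₂]
    rw [put_cast G h₂, Out.cast_cast]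

end DLens

/-- The category of small categories and (asymmetric delta) lenses. -/
def LensCat : Type (u + 1) := Cat.{u, u}

/-- Regard a small category as an object of the category of lenses. -/
def LensCat.of (C : Cat.{u, u}) : LensCat.{u} := C

/-- The underlying small category of an object of the category of lenses. -/
def LensCat.toCat (A : LensCat.{u}) : Cat.{u, u} := A

instance : Category.{u} LensCat.{u} where
  Hom A B := DLens A.toCat B.toCat
  id A := DLens.id A.toCat
  comp F G := F.comp G
  id_comp F := rfl
  comp_id F := rfl
  assoc F G H := rfl

/-- The get functor of a lens, i.e. a morphism of `LensCat` regarded as a `DLens`. -/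
def LensCat.get {A B : LensCat.{u}} (F : A ⟶ B) : A.toCat ⟶ B.toCat := (DLens.get F).toCatHom

/-- The identity-on-objects forgetful functor from the category of lenses to the
category of small categories and functors, sending a lens to its get functor. -/
def lensForget : LensCat.{u} ⥤ Cat.{u, u} where
  obj A := A.toCat
  map F := (DLens.get F).toCatHom
  map_id A := rfl
  map_comp F G := rfl

end LensPaper
open CategoryTheory CategoryTheory.Limits LensPaper

namespace LensPaper

section Aux
variable {A : Type*} [Category A] {B : Type*} [Category B] {C : Type*} [Category C]

theorem Out.eq_of {X : A} {u v : Out X} (h : u.1 = v.1) (h2 : u.2 ≫ eqToHom h = v.2) :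
    u = v := by
  obtain ⟨Y, f⟩ := u; obtain ⟨Z, g⟩ := v
  dsimp at h; subst h; exact congrArg (Sigma.mk Y) (by simpa using h2)

theorem Out.fst_eq {X : A} {u v : Out X} (h : u = v) : u.1 = v.1 := congrArg Sigma.fst h

theorem Out.snd_eq {X : A} {u v : Out X} (h : u = v) : u.2 ≫ eqToHom (Out.fst_eq h) = v.2 := by
  subst h; simp

theorem mapOut_id (F : A ⥤ B) (X : A) : mapOut F (Out.id X) = Out.id (F.obj X) := by
  simp [mapOut, Out.id]; rfl

theorem mapOut_comp (F : A ⥤ B) {X : A} (u : Out X) (v : Out u.1) :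
    mapOut F (u.comp v) = (mapOut F u).comp (mapOut F v) := by
  simp [mapOut, Out.comp]; rfl

theorem Out.comp_congr {X : A} {u u' : Out X} (h : u = u') (v : Out u.1) :
    u.comp v = u'.comp (Out.cast (congrArg Sigma.fst h) v) := by
  subst h
  exact congrArg _ (Out.cast_rfl v).symm

theorem mapOut_funext {F₁ F₂ : A ⥤ B} (h : F₁ = F₂) {X : A} (v : Out X) :
    mapOut F₂ v = Out.cast (congrArg (fun G : _ ⥤ _ => G.obj X) h) (mapOut F₁ v) := by
  subst h; exact (Out.cast_rfl _).symm

namespace DLens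

theorem putGet_fst (F : DLens A B) (X : A) (u : Out (F.get.obj X)) :
    F.get.obj (F.put X u).1 = u.1 :=
  congrArg Sigma.fst (F.putGet X u)

theorem putGet_snd (F : DLens A B) (X : A) (u : Out (F.get.obj X)) :
    F.get.map (F.put X u).2 ≫ eqToHom (F.putGet_fst X u) = u.2 :=
  Out.snd_eq (F.putGet X u)

theorem ext' {F₁ F₂ : DLens A B} (h : F₁.get = F₂.get)
    (hp : ∀ (X : A) (u : Out (F₁.get.obj X)),
      F₁.put X u = F₂.put X (Out.cast (congrArg (fun G : _ ⥤ _ => G.obj X) h) u)) :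
    F₁ = F₂ := by
  obtain ⟨g₁, p₁, pg₁, pi₁, pp₁⟩ := F₁; obtain ⟨g₂, p₂, pg₂, pi₂, pp₂⟩ := F₂
  dsimp only at h
  subst h
  have : p₁ = p₂ := by
    funext X u
    exact (hp X u).trans (congrArg (p₂ X) (Out.cast_rfl u))
  subst this
  rfl

theorem put_congr {F₁ F₂ : DLens A B} (h : F₁ = F₂) (X : A) (u : Out (F₁.get.obj X)) :
    F₁.put X u = F₂.put X (Out.cast (congrArg (fun G : DLens _ _ => G.get.obj X) h) u) := by
  subst h
  exact (congrArg (F₁.put X) (Out.cast_rfl u)).symm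

end DLens

theorem dopf_lift_unique {Φ : A ⥤ B} (hd : IsDiscreteOpfibration Φ) {X : A} {v w : Out X}
    (h : mapOut Φ v = mapOut Φ w) : v = w :=
  (hd X (mapOut Φ w)).unique h rfl

end Aux

end LensPaper
namespace LensPaper

section KP
variable {A : Type*} [Category A] {B : Type*} [Category B]

/-- Objects of the kernel-pair category of (the get functor of) a lens. -/
structure KPObj (F : DLens A B) where
  l : A
  r : A
  eq : F.get.obj l = F.get.obj r

/-- Morphisms of the kernel-pair category. -/
@[ext] structure KPHom {F : DLens A B} (p q : KPObj F) where
  l : p.l ⟶ q.l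
  r : p.r ⟶ q.r
  comm : F.get.map l ≫ eqToHom q.eq = eqToHom p.eq ≫ F.get.map r

theorem KPObj.ext' {F : DLens A B} {p q : KPObj F} (hl : p.l = q.l) (hr : p.r = q.r) :
    p = q := by
  cases p; cases q; cases hl; cases hr; rfl

variable {F : DLens A B}

instance : Category (KPObj F) where
  Hom := KPHom
  id p := ⟨𝟙 _, 𝟙 _, by simp⟩
  comp f g := ⟨f.l ≫ g.l, f.r ≫ g.r, by
    rw [F.get.map_comp, F.get.map_comp, Category.assoc, g.comm, ← Category.assoc, f.comm,
      Category.assoc]⟩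
  id_comp f := by apply KPHom.ext <;> simp
  comp_id f := by apply KPHom.ext <;> simp
  assoc f g h := by apply KPHom.ext <;> simp

@[simp] theorem KP_comp_l {p q r : KPObj F} (f : p ⟶ q) (g : q ⟶ r) :
    (f ≫ g).l = f.l ≫ g.l := rfl
@[simp] theorem KP_comp_r {p q r : KPObj F} (f : p ⟶ q) (g : q ⟶ r) :
    (f ≫ g).r = f.r ≫ g.r := rfl
@[simp] theorem KP_id_l (p : KPObj F) : (𝟙 p : p ⟶ p).l = 𝟙 p.l := rfl
@[simp] theorem KP_id_r (p : KPObj F) : (𝟙 p : p ⟶ p).r = 𝟙 p.r := rfl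

theorem KP_eqToHom_l {p q : KPObj F} (h : p = q) :
    (eqToHom h).l = eqToHom (congrArg KPObj.l h) := by subst h; rfl
theorem KP_eqToHom_r {p q : KPObj F} (h : p = q) :
    (eqToHom h).r = eqToHom (congrArg KPObj.r h) := by subst h; rfl

theorem outKP_ext {p : KPObj F} {x y : Out p}
    (hl : (⟨x.1.l, x.2.l⟩ : Out p.l) = ⟨y.1.l, y.2.l⟩)
    (hr : (⟨x.1.r, x.2.r⟩ : Out p.r) = ⟨y.1.r, y.2.r⟩) : x = y := by
  have h1 : x.1.l = y.1.l := congrArg Sigma.fst hl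
  have h2 : x.1.r = y.1.r := congrArg Sigma.fst hr
  have hobj : x.1 = y.1 := KPObj.ext' h1 h2
  apply Out.eq_of hobj
  apply KPHom.ext
  · rw [KP_comp_l, KP_eqToHom_l]
    exact Out.snd_eq hl
  · rw [KP_comp_r, KP_eqToHom_r]
    exact Out.snd_eq hr

end KP

end LensPaper
namespace LensPaper

section Pi
variable {A : Type*} [Category A] {B : Type*} [Category B] (F : DLens A B)

/-- The right-hand lift used in the put of the first projection lens. -/
def pi1lift (p : KPObj F) (u : Out p.l) : Out p.r :=
  F.put p.r ⟨F.get.obj u.1, eqToHom p.eq.symm ≫ F.get.map u.2⟩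

/-- The left-hand lift used in the put of the second projection lens. -/
def pi2lift (p : KPObj F) (u : Out p.r) : Out p.l :=
  F.put p.l ⟨F.get.obj u.1, eqToHom p.eq ≫ F.get.map u.2⟩

theorem pi1lift_eq (p : KPObj F) (u : Out p.l) :
    F.get.obj u.1 = F.get.obj (pi1lift F p u).1 :=
  (F.putGet_fst p.r ⟨F.get.obj u.1, eqToHom p.eq.symm ≫ F.get.map u.2⟩).symm

theorem pi2lift_eq (p : KPObj F) (u : Out p.r) :
    F.get.obj (pi2lift F p u).1 = F.get.obj u.1 :=
  F.putGet_fst p.l ⟨F.get.obj u.1, eqToHom p.eq ≫ F.get.map u.2⟩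

theorem comm_symm {D : Type*} [Category D] {W X Y Z : D} {q : X = W} {e : Y = Z}
    {a : X ⟶ Y} {b : W ⟶ Z} (h : a ≫ eqToHom e = eqToHom q ≫ b)
    (e' : Z = Y) (q' : W = X) : b ≫ eqToHom e' = eqToHom q' ≫ a := by
  subst q; subst e
  simp only [eqToHom_refl, Category.comp_id, Category.id_comp] at h
  simp [h]

theorem pi1lift_comm (p : KPObj F) (u : Out p.l) :
    F.get.map u.2 ≫ eqToHom (pi1lift_eq F p u) = eqToHom p.eq ≫ F.get.map (pi1lift F p u).2 :=
  comm_symm (F.putGet_snd p.r ⟨F.get.obj u.1, eqToHom p.eq.symm ≫ F.get.map u.2⟩)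
    (pi1lift_eq F p u) p.eq

theorem pi2lift_comm (p : KPObj F) (u : Out p.r) :
    F.get.map (pi2lift F p u).2 ≫ eqToHom (pi2lift_eq F p u) = eqToHom p.eq ≫ F.get.map u.2 := by
  have h := F.putGet_snd p.l ⟨F.get.obj u.1, eqToHom p.eq ≫ F.get.map u.2⟩
  dsimp only at h
  exact h

/-- The first projection lens from the kernel pair. -/
def pi1 : DLens (KPObj F) A where
  get := { obj := fun p => p.l, map := fun f => f.l,
           map_id := fun _ => rfl, map_comp := fun _ _ => rfl }
  put p u :=
    ⟨⟨u.1, (pi1lift F p u).1, pi1lift_eq F p u⟩,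
     ⟨u.2, (pi1lift F p u).2, pi1lift_comm F p u⟩⟩
  putGet p u := rfl
  putId p := by
    have harg : (⟨F.get.obj (Out.id p.l).1, eqToHom p.eq.symm ≫ F.get.map (Out.id p.l).2⟩ :
        Out (F.get.obj p.r)) = Out.id (F.get.obj p.r) := by
      apply Out.eq_of (h := p.eq)
      simp [Out.id]
    have hlift : pi1lift F p (Out.id p.l) = Out.id p.r := by
      show F.put p.r _ = _
      rw [harg]
      exact F.putId p.r
    apply outKP_ext
    · rfl
    · exact hlift
  putPut p u v h := by
    have hv : Out.cast h v = v := Out.cast_rfl v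
    rw [hv]
    apply outKP_ext
    · rfl
    · show pi1lift F p (u.comp v) = _
      have harg : (⟨F.get.obj (u.comp v).1, eqToHom p.eq.symm ≫ F.get.map (u.comp v).2⟩ :
            Out (F.get.obj p.r)) =
          Out.comp (X := F.get.obj p.r)
            ⟨F.get.obj u.1, eqToHom p.eq.symm ≫ F.get.map u.2⟩ (mapOut F.get v) := by
        simp [Out.comp, mapOut]
      calc pi1lift F p (u.comp v)
          = F.put p.r (Out.comp (X := F.get.obj p.r)
              ⟨F.get.obj u.1, eqToHom p.eq.symm ≫ F.get.map u.2⟩ (mapOut F.get v)) :=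
            congrArg (F.put p.r) harg
        _ = _ := F.putPut p.r
              (⟨F.get.obj u.1, eqToHom p.eq.symm ≫ F.get.map u.2⟩ : Out (F.get.obj p.r))
              (mapOut F.get v) (pi1lift_eq F p u)

/-- The second projection lens from the kernel pair. -/
def pi2 : DLens (KPObj F) A where
  get := { obj := fun p => p.r, map := fun f => f.r,
           map_id := fun _ => rfl, map_comp := fun _ _ => rfl }
  put p u :=
    ⟨⟨(pi2lift F p u).1, u.1, pi2lift_eq F p u⟩,
     ⟨(pi2lift F p u).2, u.2, pi2lift_comm F p u⟩⟩
  putGet p u := rfl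
  putId p := by
    have harg : (⟨F.get.obj (Out.id p.r).1, eqToHom p.eq ≫ F.get.map (Out.id p.r).2⟩ :
        Out (F.get.obj p.l)) = Out.id (F.get.obj p.l) := by
      apply Out.eq_of (h := p.eq.symm)
      simp [Out.id]
    have hlift : pi2lift F p (Out.id p.r) = Out.id p.l := by
      show F.put p.l _ = _
      rw [harg]
      exact F.putId p.l
    apply outKP_ext
    · exact hlift
    · rfl
  putPut p u v h := by
    have hv : Out.cast h v = v := Out.cast_rfl v
    rw [hv]
    apply outKP_ext
    · show pi2lift F p (u.comp v) = _
      have harg : (⟨F.get.obj (u.comp v).1, eqToHom p.eq ≫ F.get.map (u.comp v).2⟩ :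
            Out (F.get.obj p.l)) =
          Out.comp (X := F.get.obj p.l)
            ⟨F.get.obj u.1, eqToHom p.eq ≫ F.get.map u.2⟩ (mapOut F.get v) := by
        simp [Out.comp, mapOut]
      calc pi2lift F p (u.comp v)
          = F.put p.l (Out.comp (X := F.get.obj p.l)
              ⟨F.get.obj u.1, eqToHom p.eq ≫ F.get.map u.2⟩ (mapOut F.get v)) :=
            congrArg (F.put p.l) harg
        _ = _ := F.putPut p.l
              (⟨F.get.obj u.1, eqToHom p.eq ≫ F.get.map u.2⟩ : Out (F.get.obj p.l))
              (mapOut F.get v) (pi2lift_eq F p u).symm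
    · rfl

end Pi

end LensPaper
namespace LensPaper

section PiComp
variable {A : Type*} [Category A] {B : Type*} [Category B] (F : DLens A B)

theorem pi_get_eq : (pi1 F).get ⋙ F.get = (pi2 F).get ⋙ F.get := by
  refine CategoryTheory.Functor.ext (fun p => p.eq) (fun p q f => ?_)
  have h := f.comm
  rw [comp_eqToHom_iff] at h
  show F.get.map f.l = _ ≫ F.get.map f.r ≫ _; rw [h]; simp; rfl

theorem pi_comp_eq : DLens.comp (pi1 F) F = DLens.comp (pi2 F) F := by
  apply DLens.ext' (pi_get_eq F)
  intro p u
  show (pi1 F).put p (F.put p.l u) = (pi2 F).put p (F.put p.r (Out.cast _ u))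
  have c1 : (⟨F.get.obj (F.put p.l u).1,
      eqToHom p.eq.symm ≫ F.get.map (F.put p.l u).2⟩ : Out (F.get.obj p.r)) =
      Out.cast p.eq u := by
    show Out.cast p.eq (mapOut F.get (F.put p.l u)) = Out.cast p.eq u
    exact congrArg (Out.cast p.eq) (F.putGet p.l u)
  have hlift1 : pi1lift F p (F.put p.l u) = F.put p.r (Out.cast p.eq u) := by
    show F.put p.r _ = _
    rw [c1]
  have c2 : (⟨F.get.obj (F.put p.r (Out.cast p.eq u)).1,
      eqToHom p.eq ≫ F.get.map (F.put p.r (Out.cast p.eq u)).2⟩ : Out (F.get.obj p.l)) = u := by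
    show Out.cast p.eq.symm (mapOut F.get (F.put p.r (Out.cast p.eq u))) = u
    rw [F.putGet]
    exact (Out.cast_cast (X := F.get.obj p.l) p.eq p.eq.symm u).trans (Out.cast_rfl u)
  have hlift2 : pi2lift F p (F.put p.r (Out.cast p.eq u)) = F.put p.l u := by
    show F.put p.l _ = _
    rw [c2]
  apply outKP_ext
  · show (F.put p.l u : Out p.l) = ⟨(pi2lift F p (F.put p.r (Out.cast _ u))).1,
      (pi2lift F p (F.put p.r (Out.cast _ u))).2⟩
    exact hlift2.symm
  · show (⟨(pi1lift F p (F.put p.l u)).1, (pi1lift F p (F.put p.l u)).2⟩ : Out p.r)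
      = F.put p.r (Out.cast _ u)
    exact hlift1

end PiComp

end LensPaper
namespace LensPaper

section MonoCosieve
variable {A B : LensCat.{u}} (F : A ⟶ B)

/-- The kernel-pair category as an object of `LensCat`. -/
def KPCat : LensCat.{u} := LensCat.of (Cat.of (KPObj (F : DLens A.toCat B.toCat)))

theorem mono_pi_eq (hm : Mono F) :
    pi1 (F : DLens A.toCat B.toCat) = pi2 (F : DLens A.toCat B.toCat) :=
  hm.right_cancellation (Z := KPCat F)
    (pi1 (F : DLens A.toCat B.toCat)) (pi2 (F : DLens A.toCat B.toCat)) (pi_comp_eq F)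

theorem mono_obj_inj (hm : Mono F) : Function.Injective (DLens.get F).obj := by
  intro X Y h
  have hget := congrArg DLens.get (mono_pi_eq F hm)
  exact Functor.congr_obj hget (⟨X, Y, h⟩ : KPObj (F : DLens A.toCat B.toCat))

theorem mono_map_inj (hm : Mono F) {X Y : A.toCat} (a a' : X ⟶ Y)
    (h : (DLens.get F).map a = (DLens.get F).map a') : a = a' := by
  have hget := congrArg DLens.get (mono_pi_eq F hm)
  have hf := Functor.congr_hom hget
    (X := (⟨X, X, rfl⟩ : KPObj (F : DLens A.toCat B.toCat))) (Y := ⟨Y, Y, rfl⟩)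
    ⟨a, a', by simp [h]⟩
  have hf' : a = 𝟙 X ≫ a' ≫ 𝟙 Y := hf
  simpa using hf'

theorem mono_isCosieve (hm : Mono F) : IsCosieve (DLens.get F) := by
  refine ⟨?_, mono_obj_inj F hm⟩
  intro X u
  refine ⟨DLens.put F X u, DLens.putGet F X u, ?_⟩
  intro v hv
  have hobj : v.1 = (DLens.put F X u).1 :=
    mono_obj_inj F hm ((Out.fst_eq hv).trans (DLens.putGet_fst F X u).symm)
  apply Out.eq_of hobj
  apply mono_map_inj F hm
  rw [Functor.map_comp, eqToHom_map]
  have h2 := (Out.snd_eq hv).trans (DLens.putGet_snd F X u).symm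
  dsimp only [mapOut] at h2
  replace h2 := (comp_eqToHom_iff _ _ _).mp h2
  rw [h2]
  simp

end MonoCosieve

end LensPaper
namespace LensPaper

section OfDopf
variable {A : Type*} [Category A] {B : Type*} [Category B]

/-- The unique put function over a discrete opfibration. -/
noncomputable def dopfPut (Φ : A ⥤ B) (hd : IsDiscreteOpfibration Φ) (X : A)
    (u : Out (Φ.obj X)) : Out X :=
  (hd X u).exists.choose

theorem dopfPut_spec (Φ : A ⥤ B) (hd : IsDiscreteOpfibration Φ) (X : A) (u : Out (Φ.obj X)) :
    mapOut Φ (dopfPut Φ hd X u) = u :=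
  (hd X u).exists.choose_spec

/-- The lens structure on a discrete opfibration. -/
noncomputable def ofDopf (Φ : A ⥤ B) (hd : IsDiscreteOpfibration Φ) : DLens A B where
  get := Φ
  put := dopfPut Φ hd
  putGet := dopfPut_spec Φ hd
  putId X := dopf_lift_unique hd (by rw [dopfPut_spec, mapOut_id])
  putPut X u v h := by
    apply dopf_lift_unique hd
    rw [dopfPut_spec, mapOut_comp]
    have h2 := dopfPut_spec Φ hd _ (Out.cast h v)
    rw [h2]
    exact Out.comp_congr (dopfPut_spec Φ hd X u).symm v

end OfDopf

section CosieveMono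
variable {A B : LensCat.{u}}

theorem cosieve_mono (F : A ⟶ B) (hc : IsCosieve (DLens.get F)) : Mono F := by
  obtain ⟨hd, hinj⟩ := hc
  constructor
  intro Z G H w
  have hgets : (DLens.get G) ⋙ (DLens.get F) = (DLens.get H) ⋙ (DLens.get F) :=
    congrArg DLens.get w
  have hobj : ∀ c : Z.toCat, (DLens.get G).obj c = (DLens.get H).obj c := fun c =>
    hinj (Functor.congr_obj hgets c)
  have hget : DLens.get G = DLens.get H := by
    refine CategoryTheory.Functor.ext hobj (fun c c' f => ?_)
    have hv : mapOut (DLens.get F)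
          (⟨(DLens.get G).obj c', (DLens.get G).map f⟩ : Out ((DLens.get G).obj c))
        = mapOut (DLens.get F)
          (⟨(DLens.get H).obj c', eqToHom (hobj c) ≫ (DLens.get H).map f⟩ :
            Out ((DLens.get G).obj c)) := by
      apply Out.eq_of (h := Functor.congr_obj hgets c')
      dsimp only [mapOut]
      rw [Functor.map_comp, eqToHom_map]
      have hch := Functor.congr_hom hgets f
      dsimp only [Functor.comp_obj, Functor.comp_map] at hch
      rw [hch]
      simp
    have hu := dopf_lift_unique hd hv
    have h1 := Out.snd_eq hu
    dsimp only at h1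
    rw [← Category.assoc, ← h1]
    simp
  apply DLens.ext' hget
  intro c u
  have s1 : DLens.put F ((DLens.get G).obj c) (mapOut (DLens.get F) u) = u :=
    dopf_lift_unique hd (by rw [DLens.putGet])
  have s3 := DLens.put_congr w c (mapOut (DLens.get F) u)
  have s4 : DLens.put F ((DLens.get H).obj c)
        (Out.cast (congrArg (fun K : DLens Z.toCat B.toCat => K.get.obj c) w)
          (mapOut (DLens.get F) u))
      = Out.cast (congrArg (fun Φ : Z.toCat ⥤ A.toCat => Φ.obj c) hget) u := by
    apply dopf_lift_unique hd
    rw [DLens.putGet, mapOut_cast]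
    rfl
  calc DLens.put G c u
      = DLens.put G c (DLens.put F ((DLens.get G).obj c) (mapOut (DLens.get F) u)) := by
        rw [s1]
    _ = DLens.put H c (DLens.put F ((DLens.get H).obj c)
          (Out.cast (congrArg (fun K : DLens Z.toCat B.toCat => K.get.obj c) w)
            (mapOut (DLens.get F) u))) := s3
    _ = DLens.put H c (Out.cast (congrArg (fun Φ : Z.toCat ⥤ A.toCat => Φ.obj c) hget) u) := by
        rw [s4]

theorem cosieve_exists_unique (G : A.toCat ⟶ B.toCat) (hc : IsCosieve G.toFunctor) :
    ∃! F : A ⟶ B, DLens.get F = G.toFunctor := by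
  obtain ⟨hd, hinj⟩ := hc
  refine ⟨ofDopf G.toFunctor hd, rfl, ?_⟩
  intro F' hF'
  apply DLens.ext' (F₂ := ofDopf G.toFunctor hd) hF'
  intro X u
  apply dopf_lift_unique hd
  exact (mapOut_funext hF' (DLens.put F' X u)).trans
    ((congrArg (Out.cast _) (DLens.putGet F' X u)).trans (dopfPut_spec G.toFunctor hd X _).symm)

end CosieveMono

end LensPaper
/-- A lens is a monomorphism in `Lens` iff its get functor is a
cosieve; moreover every cosieve carries exactly one lens structure, so the
forgetful functor restricts to a bijection between monic lenses and cosieves. -/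
theorem mono_lens_iff_isCosieve :
    (∀ (A B : LensCat.{u}) (F : A ⟶ B), Mono F ↔ IsCosieve (DLens.get F)) ∧
    (∀ (A B : LensCat.{u}) (G : A.toCat ⟶ B.toCat), IsCosieve G.toFunctor →
      ∃! F : A ⟶ B, DLens.get F = G.toFunctor) := by
  refine ⟨fun A B F => ⟨fun hm => mono_isCosieve F hm, fun hc => cosieve_mono F hc⟩,
    fun A B G hc => cosieve_exists_unique G hc⟩
end

section
/- Every functor between small categories that is an epimorphism in the category Cat of small categories and functors is surjective on objects. -/
universe u

open CategoryTheory CategoryTheory.Limits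

open CategoryTheory CategoryTheory.Limits LensPaper

/-- Auxiliary codiscrete two-object category. -/
structure CoBool : Type u where
  b : Bool

instance : CategoryTheory.Category.{u} CoBool.{u} where
  Hom _ _ := PUnit
  id _ := ⟨⟩
  comp _ _ := ⟨⟩

/-- Every epimorphism in `Cat` is surjective on objects. -/
theorem epi_functor_surjective_on_objects (A B : Cat.{u, u}) (F : A ⟶ B)
    (hF : Epi F) : Function.Surjective F.toFunctor.obj := by
  classical
  intro b
  by_contra hb
  push_neg at hb
  let C : Cat.{u, u} := Cat.of CoBool.{u}
  let G : B ⟶ C := Functor.toCatHom { obj := fun _ => ⟨true⟩, map := fun _ => ⟨⟩ }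
  let H : B ⟶ C := Functor.toCatHom
    { obj := fun x => ⟨decide (∃ a, F.toFunctor.obj a = x)⟩, map := fun _ => ⟨⟩ }
  have hobj : ∀ a, (F ≫ G).toFunctor.obj a = (F ≫ H).toFunctor.obj a := by
    intro a
    show (⟨true⟩ : CoBool) = ⟨decide _⟩
    simp only [CoBool.mk.injEq]
    rw [eq_comm, decide_eq_true_eq]
    exact ⟨a, rfl⟩
  have hcomp : F ≫ G = F ≫ H :=
    Cat.ext (CategoryTheory.Functor.ext hobj (fun X Y f => rfl))
  have := hF.left_cancellation G H hcomp
  have hobj : G.toFunctor.obj b = H.toFunctor.obj b := by rw [this]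
  have : (true : Bool) = decide (∃ a, F.toFunctor.obj a = b) := congrArg CoBool.b hobj
  rw [eq_comm, decide_eq_true_eq] at this
  obtain ⟨a, ha⟩ := this
  exact hb a ha
end

section
/- For a lens F : A → B, the following are equivalent: (1) F is an epimorphism in the category Lens; (2) the get functor of F is surjective on objects; (3) the get functor of F is surjective on morphisms. -/
universe u

open CategoryTheory CategoryTheory.Limits

open CategoryTheory CategoryTheory.Limits LensPaper


namespace LensEpiAux

open CategoryTheory LensPaper

universe v

section General

variable {A : Type*} [Category A] {B : Type*} [Category B]

theorem comp_congr_heq {X Y Z X' Y' Z' : B} (hX : X = X') (hY : Y = Y') (hZ : Z = Z')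
    {f : X ⟶ Y} {f' : X' ⟶ Y'} {g : Y ⟶ Z} {g' : Y' ⟶ Z'} (hf : HEq f f') (hg : HEq g g') :
    HEq (f ≫ g) (f' ≫ g') := by
  subst hX; subst hY; subst hZ
  rw [eq_of_heq hf, eq_of_heq hg]

theorem dlens_ext {F G : DLens A B} (h : F.get = G.get)
    (hp : ∀ (X : A) (u : Out (F.get.obj X)),
      F.put X u = G.put X (Out.cast (congrArg (fun H : A ⥤ B => H.obj X) h) u)) :
    F = G := by
  obtain ⟨g₁, p₁, _, _, _⟩ := F
  obtain ⟨g₂, p₂, _, _, _⟩ := G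
  dsimp only at h
  subst h
  have hp' : p₁ = p₂ := by
    funext X u
    have h2 := hp X u
    simpa using h2
  subst hp'
  rfl

theorem dlens_congr_put {F G : DLens A B} (h : F = G) (X : A) (u : Out (F.get.obj X)) :
    F.put X u = G.put X (Out.cast (congrArg (fun H : A ⥤ B => H.obj X) (congrArg DLens.get h)) u) := by
  subst h
  simp

/-- putPut follows from putGet when `mapOut get` is injective. -/
theorem putPut_of_inj (get : A ⥤ B)
    (put : ∀ X : A, Out (get.obj X) → Out X)
    (pg : ∀ (X : A) (u : Out (get.obj X)), mapOut get (put X u) = u)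
    (inj : ∀ (X : A) (a b : Out X), mapOut get a = mapOut get b → a = b)
    (X : A) (u : Out (get.obj X)) (v : Out u.1) (h : u.1 = get.obj (put X u).1) :
    put X (u.comp v) = (put X u).comp (put (put X u).1 (Out.cast h v)) := by
  obtain ⟨V, q⟩ := v
  apply inj X
  rw [pg]
  have ea := pg X u
  have eb := pg (put X u).1 (Out.cast h ⟨V, q⟩)
  have hcomp : mapOut get ((put X u).comp (put (put X u).1 (Out.cast h ⟨V, q⟩)))
      = ⟨get.obj (put (put X u).1 (Out.cast h ⟨V, q⟩)).1,
          get.map (put X u).2 ≫ get.map (put (put X u).1 (Out.cast h ⟨V, q⟩)).2⟩ :=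
    congrArg (fun m => (⟨get.obj (put (put X u).1 (Out.cast h ⟨V, q⟩)).1, m⟩ : Out (get.obj X)))
      (get.map_comp (put X u).2 (put (put X u).1 (Out.cast h ⟨V, q⟩)).2)
  rw [hcomp]
  have ebV : get.obj (put (put X u).1 (Out.cast h ⟨V, q⟩)).1 = V :=
    congrArg Sigma.fst eb
  have ebq : HEq (get.map (put (put X u).1 (Out.cast h ⟨V, q⟩)).2) (eqToHom h.symm ≫ q) :=
    (Sigma.ext_iff.mp eb).2
  have eaU : get.obj (put X u).1 = u.1 := congrArg Sigma.fst ea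
  have eap : HEq (get.map (put X u).2) u.2 := (Sigma.ext_iff.mp ea).2
  have hg2 : HEq q (get.map (put (put X u).1 (Out.cast h ⟨V, q⟩)).2) :=
    HEq.trans (eqToHom_comp_heq q h.symm).symm ebq.symm
  exact Sigma.ext ebV.symm (comp_congr_heq rfl eaU.symm ebV.symm eap.symm hg2)

end General

section Construction

variable {B : Type v} [Category.{v} B]

/-- A set of objects closed under targets of morphisms out of it. -/
structure OCSet (B : Type v) [Category.{v} B] : Type v where
  carrier : Set B
  closed : ∀ ⦃X Y : B⦄, (X ⟶ Y) → X ∈ carrier → Y ∈ carrier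

variable (S : OCSet B)

def CObj : Type v := {p : B × Bool // p.1 ∈ S.carrier → p.2 = true}

instance : Category.{v} (CObj S) where
  Hom P Q := {f : P.val.1 ⟶ Q.val.1 // Q.val.1 ∉ S.carrier → P.val.2 = Q.val.2}
  id P := ⟨𝟙 P.val.1, fun _ => rfl⟩
  comp f g := ⟨f.val ≫ g.val, fun hZ =>
    (f.prop fun hY => hZ (S.closed g.val hY)).trans (g.prop hZ)⟩
  id_comp f := Subtype.ext (Category.id_comp f.val)
  comp_id f := Subtype.ext (Category.comp_id f.val)
  assoc f g h := Subtype.ext (Category.assoc f.val g.val h.val)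

theorem cobj_eqToHom_val {P Q : CObj S} (e : P = Q) (d : P.val.1 = Q.val.1) :
    (eqToHom e).val = eqToHom d := by
  subst e; rfl

theorem val_eqToHom_comp {P Q : CObj S} (e : P = Q) {Z : B}
    (m : Q.val.1 ⟶ Z) (m' : P.val.1 ⟶ Z) (hm : HEq m m') :
    (eqToHom e).val ≫ m = m' := by
  subst e
  exact (Category.id_comp m).trans (eq_of_heq hm)

def indGet (g : B → Bool) (hg1 : ∀ X, X ∈ S.carrier → g X = true)
    (hg2 : ∀ ⦃X Y : B⦄, (X ⟶ Y) → Y ∉ S.carrier → g X = g Y) : B ⥤ CObj S where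
  obj X := ⟨(X, g X), hg1 X⟩
  map {X Y} f := ⟨f, fun hY => hg2 f hY⟩
  map_id X := rfl
  map_comp f g := rfl

variable (g : B → Bool) (hg1 : ∀ X, X ∈ S.carrier → g X = true)
    (hg2 : ∀ ⦃X Y : B⦄, (X ⟶ Y) → Y ∉ S.carrier → g X = g Y)

theorem indGet_putGet (X : B) (u : Out ((indGet S g hg1 hg2).obj X)) :
    mapOut (indGet S g hg1 hg2) ⟨u.1.val.1, u.2.val⟩ = u := by
  obtain ⟨⟨⟨Y, j⟩, hY⟩, f, hf⟩ := u
  have hj : g Y = j := by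
    by_cases hYS : Y ∈ S.carrier
    · exact (hg1 Y hYS).trans (hY hYS).symm
    · exact (hg2 f hYS).symm.trans (hf hYS)
  subst hj
  rfl

theorem indGet_inj (X : B) (a b : Out X)
    (h : mapOut (indGet S g hg1 hg2) a = mapOut (indGet S g hg1 hg2) b) : a = b := by
  obtain ⟨Y, f⟩ := a
  obtain ⟨Y', f'⟩ := b
  have h1 : Y = Y' := congrArg (fun w : Out ((indGet S g hg1 hg2).obj X) => w.1.val.1) h
  subst h1
  have h2 : HEq ((indGet S g hg1 hg2).map f) ((indGet S g hg1 hg2).map f') :=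
    (Sigma.ext_iff.mp h).2
  have h3 : f = f' := congrArg Subtype.val (eq_of_heq h2)
  rw [h3]

noncomputable def indLens : DLens B (CObj S) where
  get := indGet S g hg1 hg2
  put X u := ⟨u.1.val.1, u.2.val⟩
  putGet X u := indGet_putGet S g hg1 hg2 X u
  putId X := rfl
  putPut X u v h :=
    putPut_of_inj (indGet S g hg1 hg2) (fun X u => ⟨u.1.val.1, u.2.val⟩)
      (indGet_putGet S g hg1 hg2) (indGet_inj S g hg1 hg2) X u v h

noncomputable def chi (Y : B) : Bool :=
  @ite _ (Y ∈ S.carrier) (Classical.propDecidable _) true false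

theorem chi_true {Y : B} (h : Y ∈ S.carrier) : chi S Y = true := if_pos h

theorem chi_false {Y : B} (h : Y ∉ S.carrier) : chi S Y = false := if_neg h

theorem chi_hg2 ⦃X Y : B⦄ (f : X ⟶ Y) (hY : Y ∉ S.carrier) : chi S X = chi S Y := by
  have hX : X ∉ S.carrier := fun h => hY (S.closed f h)
  rw [chi_false S hX, chi_false S hY]

noncomputable def lensOne : DLens B (CObj S) :=
  indLens S (fun _ => true) (fun _ _ => rfl) (fun _ _ _ _ => rfl)

noncomputable def lensChi : DLens B (CObj S) :=
  indLens S (chi S) (fun _ h => chi_true S h) (chi_hg2 S)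

end Construction

end LensEpiAux

namespace LensEpiAux

open CategoryTheory LensPaper

section EpiDir

variable {A : Type*} [Category A] {B : Type*} [Category B] (S : OCSet B)

theorem comp_lensOne_eq_comp_lensChi (F : DLens A B)
    (hS : ∀ a : A, F.get.obj a ∈ S.carrier) :
    F.comp (lensOne S) = F.comp (lensChi S) := by
  have hobj : ∀ a : A, (F.get ⋙ (lensOne S).get).obj a = (F.get ⋙ (lensChi S).get).obj a := by
    intro a
    apply Subtype.ext
    show (F.get.obj a, true) = (F.get.obj a, chi S (F.get.obj a))
    rw [chi_true S (hS a)]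
  have hget : (F.comp (lensOne S)).get = (F.comp (lensChi S)).get := by
    refine CategoryTheory.Functor.ext hobj ?_
    intro X Y f
    apply Subtype.ext
    show F.get.map f = (eqToHom (hobj X)).val ≫ F.get.map f ≫ (eqToHom (hobj Y).symm).val
    rw [cobj_eqToHom_val S (hobj X) rfl, cobj_eqToHom_val S (hobj Y).symm rfl]
    show F.get.map f = 𝟙 _ ≫ F.get.map f ≫ 𝟙 _
    rw [Category.id_comp]
    exact (Category.comp_id (F.get.map f)).symm
  apply dlens_ext hget
  intro X u
  have key : ∀ (e : (F.get ⋙ (lensOne S).get).obj X = (F.get ⋙ (lensChi S).get).obj X),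
      F.put X ((lensOne S).put (F.get.obj X) u)
        = F.put X ((lensChi S).put (F.get.obj X) (Out.cast e u)) := by
    intro e
    apply congrArg (F.put X)
    show (⟨u.1.val.1, u.2.val⟩ : Out (F.get.obj X))
        = ⟨u.1.val.1, (eqToHom e.symm ≫ u.2).val⟩
    exact congrArg (fun w => (⟨u.1.val.1, w⟩ : Out (F.get.obj X)))
      (val_eqToHom_comp S e.symm u.2.val u.2.val HEq.rfl).symm
  exact key _

theorem lensOne_ne_lensChi {Y₀ : B} (h : Y₀ ∉ S.carrier) :
    lensOne S ≠ lensChi S := by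
  intro h'
  have h1 := congrArg (fun L : DLens B (CObj S) => ((L.get.obj Y₀).val.2)) h'
  have h2 : true = chi S Y₀ := h1
  rw [chi_false S h] at h2
  exact Bool.noConfusion h2

end EpiDir

end LensEpiAux

/-- For a lens `F`, the following are equivalent: `F` is an
epimorphism in `Lens`; the get functor of `F` is surjective on objects; the get
functor of `F` is surjective on morphisms. -/
theorem epi_lens_iff_surjective (A B : LensCat.{u}) (F : A ⟶ B) :
    (Epi F ↔ Function.Surjective (DLens.get F).obj) ∧
    (Epi F ↔ Function.Surjective (mapMor (DLens.get F))) := by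
  have L1 : Function.Surjective (DLens.get F).obj →
      Function.Surjective (mapMor (DLens.get F)) := by
    intro hs m
    obtain ⟨Y, Z, b⟩ := m
    obtain ⟨X, rfl⟩ := hs Y
    refine ⟨⟨X, (DLens.put F X ⟨Z, b⟩).1, (DLens.put F X ⟨Z, b⟩).2⟩, ?_⟩
    exact congrArg
      (fun w : Out ((DLens.get F).obj X) => (⟨(DLens.get F).obj X, w.1, w.2⟩ : Mor _))
      (DLens.putGet F X ⟨Z, b⟩)
  have L2 : Function.Surjective (mapMor (DLens.get F)) →
      Function.Surjective (DLens.get F).obj := by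
    intro hm Y
    obtain ⟨m, hm'⟩ := hm ⟨Y, Y, 𝟙 Y⟩
    exact ⟨m.1, congrArg (fun w : Mor _ => w.1) hm'⟩
  have L3 : Function.Surjective (mapMor (DLens.get F)) → Epi F := by
    intro hm
    have hs := L2 hm
    constructor
    intro C G₁ G₂ hc
    have hg : DLens.get (F ≫ G₁) = DLens.get (F ≫ G₂) := congrArg DLens.get hc
    have hobj : ∀ Y, (DLens.get G₁).obj Y = (DLens.get G₂).obj Y := by
      intro Y
      obtain ⟨X, rfl⟩ := hs Y
      exact Functor.congr_obj hg X
    have key : ∀ m : Mor B.toCat, (DLens.get G₁).map m.2.2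
        = eqToHom (hobj m.1) ≫ (DLens.get G₂).map m.2.2 ≫ eqToHom (hobj m.2.1).symm := by
      intro m
      obtain ⟨m', rfl⟩ := hm m
      obtain ⟨X, X', a⟩ := m'
      exact Functor.congr_hom hg a
    have hget : DLens.get G₁ = DLens.get G₂ :=
      CategoryTheory.Functor.ext hobj (fun Y Z f => key ⟨Y, Z, f⟩)
    apply LensEpiAux.dlens_ext hget
    intro Y u
    obtain ⟨X, rfl⟩ := hs Y
    have h1 := LensEpiAux.dlens_congr_put hc X u
    have h2 : mapOut (DLens.get F)
          (DLens.put F X (DLens.put G₁ ((DLens.get F).obj X) u))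
        = mapOut (DLens.get F)
          (DLens.put F X (DLens.put G₂ ((DLens.get F).obj X)
            (Out.cast (congrArg (fun H => H.obj X) (congrArg DLens.get hc)) u))) :=
      congrArg (mapOut (DLens.get F)) h1
    rw [DLens.putGet F, DLens.putGet F] at h2
    exact h2
  have L4 : Epi F → Function.Surjective (DLens.get F).obj := by
    intro hEpi
    by_contra hns
    rw [Function.Surjective] at hns
    push_neg at hns
    obtain ⟨Y₀, hY₀⟩ := hns
    have Sclosed : ∀ ⦃X Y : B.toCat⦄, (X ⟶ Y) →
        X ∈ Set.range (DLens.get F).obj → Y ∈ Set.range (DLens.get F).obj := by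
      intro X Y f hX
      obtain ⟨a, rfl⟩ := hX
      exact ⟨(DLens.put F a ⟨Y, f⟩).1, congrArg Sigma.fst (DLens.putGet F a ⟨Y, f⟩)⟩
    let S : LensEpiAux.OCSet B.toCat := ⟨Set.range (DLens.get F).obj, Sclosed⟩
    let C : LensCat.{u} := LensCat.of (Cat.of (LensEpiAux.CObj S))
    have hc : DLens.comp F (LensEpiAux.lensOne S) = DLens.comp F (LensEpiAux.lensChi S) :=
      LensEpiAux.comp_lensOne_eq_comp_lensChi S F (fun a => ⟨a, rfl⟩)
    have heq : LensEpiAux.lensOne S = LensEpiAux.lensChi S :=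
      hEpi.left_cancellation (Z := C) (LensEpiAux.lensOne S) (LensEpiAux.lensChi S) hc
    exact LensEpiAux.lensOne_ne_lensChi S (fun hmem => by
      obtain ⟨a, ha⟩ := hmem
      exact hY₀ a ha) heq
  exact ⟨⟨L4, fun h => L3 (L1 h)⟩, ⟨fun h => L1 (L4 h), L3⟩⟩
end

section
/- If a commutative square in the category Cat of small categories and functors, with sides J : A → B a cosieve, F : A → C a discrete opfibration, F̄ : B → D and J̄ : C → D, is a pushout square, then the functor F̄ (the pushout of F along the cosieve J) is a discrete opfibration. -/
universe u

open CategoryTheory CategoryTheory.Limits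

open CategoryTheory CategoryTheory.Limits LensPaper

namespace PushoutAux

section Lifts

variable {A : Type u} [Category.{u} A] {C : Type u} [Category.{u} C]

theorem out_ext {X : A} {u v : Out X} (e : u.1 = v.1) (h : HEq u.2 v.2) : u = v := by
  obtain ⟨u1, u2⟩ := u; obtain ⟨v1, v2⟩ := v
  dsimp at e; subst e; dsimp at h; subst h; rfl

theorem mapOut_eq_iff {F : A ⥤ C} {X : A} {v : Out X} {u : Out (F.obj X)} :
    mapOut F v = u ↔ ∃ e : F.obj v.1 = u.1, F.map v.2 = u.2 ≫ eqToHom e.symm := by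
  constructor
  · rintro rfl; exact ⟨rfl, by simp [mapOut]⟩
  · rintro ⟨e, h⟩
    obtain ⟨u1, u2⟩ := u; dsimp at e; subst e
    exact out_ext (by simp [mapOut]) (by simpa [mapOut] using h)

variable {F : A ⥤ C} (hF : IsDiscreteOpfibration F)

/-- The chosen lift of a discrete opfibration. -/
noncomputable def olift (x : A) (u : Out (F.obj x)) : Out x := (hF x u).choose

theorem olift_spec (x : A) (u : Out (F.obj x)) : mapOut F (olift hF x u) = u :=
  (hF x u).choose_spec.1

theorem olift_eq {x : A} {u : Out (F.obj x)} {v : Out x} (h : mapOut F v = u) :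
    v = olift hF x u :=
  (hF x u).choose_spec.2 v h

theorem olift_fst (x : A) (u : Out (F.obj x)) : F.obj (olift hF x u).1 = u.1 :=
  congrArg Sigma.fst (olift_spec hF x u)

theorem olift_snd (x : A) (u : Out (F.obj x)) :
    F.map (olift hF x u).2 = u.2 ≫ eqToHom (olift_fst hF x u).symm := by
  obtain ⟨e, h⟩ := mapOut_eq_iff.mp (olift_spec hF x u)
  exact h

include hF in
theorem mapOut_injective {Y : A} {w w' : Out Y} (h : mapOut F w = mapOut F w') : w = w' :=
  ((hF Y (mapOut F w')).unique h rfl)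

end Lifts

section Construction

variable {A : Type u} [Category.{u} A] {B : Type u} [Category.{u} B] {C : Type u}
  [Category.{u} C]

variable (J : A ⥤ B) (F : A ⥤ C)

/-- Objects of the explicit pushout of `F` along the cosieve `J`. -/
def PObj (_F : A ⥤ C) : Type u := C ⊕ {b : B // ¬ ∃ a, J.obj a = b}

/-- Morphisms of the explicit pushout. -/
abbrev PHom : PObj J F → PObj J F → Type u
  | Sum.inl c, Sum.inl c' => c ⟶ c'
  | Sum.inl _, Sum.inr _ => PEmpty
  | Sum.inr b, Sum.inl c => Σ a : {a : A // F.obj a = c}, ((b.1 : B) ⟶ J.obj a.1)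
  | Sum.inr b, Sum.inr b' => (b.1 : B) ⟶ b'.1

/-- Identities of the explicit pushout. -/
def pId : ∀ x : PObj J F, PHom J F x x
  | Sum.inl c => (𝟙 c : c ⟶ c)
  | Sum.inr b => (𝟙 b.1 : b.1 ⟶ b.1)

theorem mixed_ext {b : {b : B // ¬ ∃ a, J.obj a = b}} {c' : C}
    {x y : Σ a : {a : A // F.obj a = c'}, ((b.1 : B) ⟶ J.obj a.1)}
    (e : x.1.1 = y.1.1) (h : HEq x.2 y.2) : x = y := by
  obtain ⟨⟨xa, xe⟩, xg⟩ := x; obtain ⟨⟨ya, ye⟩, yg⟩ := y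
  dsimp at e; subst e
  dsimp at h
  rw [eq_of_heq h]

variable {F} (hF : IsDiscreteOpfibration F)

/-- Composition in the explicit pushout. -/
noncomputable def pComp :
    ∀ {x y z : PObj J F}, PHom J F x y → PHom J F y z → PHom J F x z
  | Sum.inl _, Sum.inl _, Sum.inl _, f, g => (f ≫ g : _ ⟶ _)
  | Sum.inl _, Sum.inl _, Sum.inr _, _, g => g.elim
  | Sum.inl _, Sum.inr _, _, f, _ => f.elim
  | Sum.inr _, Sum.inl _, Sum.inr _, _, g => g.elim
  | Sum.inr _, Sum.inr _, Sum.inr _, f, g => (f ≫ g : _ ⟶ _)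
  | Sum.inr _, Sum.inr _, Sum.inl _, f, g => ⟨g.1, f ≫ g.2⟩
  | Sum.inr _, Sum.inl _, Sum.inl c', f, k =>
      ⟨⟨(olift hF f.1.1 ⟨c', eqToHom f.1.2 ≫ k⟩).1, olift_fst hF f.1.1 _⟩,
        f.2 ≫ J.map (olift hF f.1.1 ⟨c', eqToHom f.1.2 ≫ k⟩).2⟩

theorem pComp_mixed {b : {b : B // ¬ ∃ a, J.obj a = b}} {c c' : C}
    (f : PHom J F (Sum.inr b) (Sum.inl c)) (k : PHom J F (Sum.inl c) (Sum.inl c'))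
    (a' : A) (e' : F.obj a' = c') (m : f.1.1 ⟶ a')
    (hm : F.map m = (eqToHom f.1.2 ≫ k) ≫ eqToHom e'.symm) :
    pComp J hF f k = ⟨⟨a', e'⟩, f.2 ≫ J.map m⟩ := by
  have h : olift hF f.1.1 ⟨c', eqToHom f.1.2 ≫ k⟩ = ⟨a', m⟩ :=
    (olift_eq hF (mapOut_eq_iff.mpr ⟨e', hm⟩)).symm
  apply mixed_ext
  · show (olift hF f.1.1 ⟨c', eqToHom f.1.2 ≫ k⟩).1 = a'
    rw [h]
  · show HEq (f.2 ≫ J.map (olift hF f.1.1 ⟨c', eqToHom f.1.2 ≫ k⟩).2) (f.2 ≫ J.map m)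
    rw [h]

theorem pComp_id_left : ∀ {x y : PObj J F} (f : PHom J F x y),
    pComp J hF (pId J F x) f = f := by
  rintro (c | b) (c' | b') f
  · exact Category.id_comp (f : c ⟶ c')
  · exact PEmpty.elim f
  · show pComp J hF ((𝟙 b.1 : b.1 ⟶ b.1) : PHom J F (Sum.inr b) (Sum.inr b)) f = f
    apply mixed_ext (x := (⟨f.1, 𝟙 b.1 ≫ f.2⟩ : PHom J F (Sum.inr b) (Sum.inl c')))
    · rfl
    · show HEq (𝟙 b.1 ≫ f.2) f.2
      rw [Category.id_comp]
  · exact Category.id_comp (f : b.1 ⟶ b'.1)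

theorem pComp_id_right : ∀ {x y : PObj J F} (f : PHom J F x y),
    pComp J hF f (pId J F y) = f := by
  rintro (c | b) (c' | b') f
  · exact Category.comp_id (f : c ⟶ c')
  · exact PEmpty.elim f
  · show pComp J hF f ((𝟙 c' : c' ⟶ c') : PHom J F (Sum.inl c') (Sum.inl c')) = f
    rw [pComp_mixed J hF f _ f.1.1 f.1.2 (𝟙 f.1.1) (by simp)]
    apply mixed_ext
    · rfl
    · show HEq (f.2 ≫ J.map (𝟙 f.1.1)) f.2
      simp
  · exact Category.comp_id (f : b.1 ⟶ b'.1)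

theorem pComp_assoc : ∀ {p q r s : PObj J F} (f : PHom J F p q) (g : PHom J F q r)
    (h : PHom J F r s),
    pComp J hF (pComp J hF f g) h = pComp J hF f (pComp J hF g h) := by
  rintro (c | b) (x | bx) (y | by') (z | bz) f g h
  · exact Category.assoc (f : c ⟶ x) g h
  · exact PEmpty.elim h
  · exact PEmpty.elim g
  · exact PEmpty.elim g
  · exact PEmpty.elim f
  · exact PEmpty.elim f
  · exact PEmpty.elim f
  · exact PEmpty.elim f
  · -- inr, inl, inl, inl
    set w := olift hF f.1.1 ⟨y, eqToHom f.1.2 ≫ g⟩ with hw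
    have h1 : pComp J hF f g
        = (⟨⟨w.1, olift_fst hF f.1.1 _⟩, f.2 ≫ J.map w.2⟩ :
            PHom J F (Sum.inr b) (Sum.inl y)) := rfl
    set v := olift hF w.1 ⟨z, eqToHom (olift_fst hF f.1.1 _) ≫ h⟩ with hv
    have h2 : pComp (x := Sum.inr b) (y := Sum.inl y) (z := Sum.inl z) J hF
        ⟨⟨w.1, olift_fst hF f.1.1 _⟩, f.2 ≫ J.map w.2⟩ h
        = (⟨⟨v.1, olift_fst hF w.1 _⟩, (f.2 ≫ J.map w.2) ≫ J.map v.2⟩ :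
            PHom J F (Sum.inr b) (Sum.inl z)) := rfl
    have h3 : pComp J hF g h = ((g ≫ h : x ⟶ z) : PHom J F (Sum.inl x) (Sum.inl z)) := rfl
    rw [h1, h2, h3]
    rw [pComp_mixed J hF f ((g ≫ h : x ⟶ z) : PHom J F (Sum.inl x) (Sum.inl z))
      v.1 (olift_fst hF w.1 _) (w.2 ≫ v.2) ?_]
    · apply mixed_ext
      · rfl
      · show HEq ((f.2 ≫ J.map w.2) ≫ J.map v.2) (f.2 ≫ J.map (w.2 ≫ v.2))
        rw [J.map_comp, Category.assoc]
    · erw [F.map_comp, olift_snd hF, olift_snd hF]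
      simp
  · exact PEmpty.elim h
  · exact PEmpty.elim g
  · exact PEmpty.elim g
  · -- inr, inr, inl, inl
    set v := olift hF g.1.1 ⟨z, eqToHom g.1.2 ≫ h⟩ with hv
    have h1 : pComp J hF (pComp J hF f g) h
        = (⟨⟨v.1, olift_fst hF g.1.1 _⟩, (f ≫ g.2) ≫ J.map v.2⟩ :
            PHom J F (Sum.inr b) (Sum.inl z)) := rfl
    have h2 : pComp J hF f (pComp J hF g h)
        = (⟨⟨v.1, olift_fst hF g.1.1 _⟩, f ≫ (g.2 ≫ J.map v.2)⟩ :
            PHom J F (Sum.inr b) (Sum.inl z)) := rfl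
    rw [h1, h2, Category.assoc]
  · exact PEmpty.elim h
  · -- inr, inr, inr, inl
    show (⟨h.1, ((f ≫ g : b.1 ⟶ by'.1)) ≫ h.2⟩ : PHom J F (Sum.inr b) (Sum.inl z))
        = ⟨h.1, (f : b.1 ⟶ bx.1) ≫ ((g : bx.1 ⟶ by'.1) ≫ h.2)⟩
    rw [Category.assoc]
  · exact Category.assoc (f : b.1 ⟶ bx.1) g h

/-- The category structure on the explicit pushout. -/
noncomputable def pCat : Category.{u} (PObj J F) where
  Hom := PHom J F
  id := pId J F
  comp := pComp J hF
  id_comp := pComp_id_left J hF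
  comp_id := pComp_id_right J hF
  assoc := pComp_assoc J hF

/-- A carrier type synonym recording the discrete-opfibration hypothesis. -/
def PCarrier (_hF : IsDiscreteOpfibration F) : Type u := PObj J F

noncomputable instance : Category.{u} (PCarrier J hF) := pCat J hF

/-- The left inclusion on objects. -/
def pinl (c : C) : PCarrier J hF := Sum.inl c

/-- The right inclusion on objects. -/
def pinr (b : {b : B // ¬ ∃ a, J.obj a = b}) : PCarrier J hF := Sum.inr b

/-- The explicit pushout as an object of `Cat`. -/
noncomputable def DP : Cat.{u, u} := Cat.of (PCarrier J hF)

/-- Hom constructor between left objects. -/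
noncomputable def homInl {c c' : C} (k : c ⟶ c') :
    pinl J hF c ⟶ pinl J hF c' := k

/-- Hom constructor between right objects. -/
noncomputable def homInr {b b' : {b : B // ¬ ∃ a, J.obj a = b}} (g : (b.1 : B) ⟶ b'.1) :
    pinr J hF b ⟶ pinr J hF b' := g

/-- Hom constructor for mixed morphisms. -/
noncomputable def homMix {b : {b : B // ¬ ∃ a, J.obj a = b}} {c : C} (a : A)
    (e : F.obj a = c) (g : (b.1 : B) ⟶ J.obj a) :
    pinr J hF b ⟶ pinl J hF c :=
  (⟨⟨a, e⟩, g⟩ : PHom J F (Sum.inr b) (Sum.inl c))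

theorem homInl_id {c : C} : homInl J hF (𝟙 c) = 𝟙 (pinl J hF c) := rfl

theorem homInr_id {b : {b : B // ¬ ∃ a, J.obj a = b}} :
    homInr J hF (𝟙 b.1) = 𝟙 (pinr J hF b) := rfl

@[simp] theorem homInl_comp {c c' c'' : C} (k : c ⟶ c') (k' : c' ⟶ c'') :
    homInl J hF k ≫ homInl J hF k' = homInl J hF (k ≫ k') := rfl

@[simp] theorem homInr_comp {b b' b'' : {b : B // ¬ ∃ a, J.obj a = b}}
    (g : (b.1 : B) ⟶ b'.1) (g' : (b'.1 : B) ⟶ b''.1) :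
    homInr J hF g ≫ homInr J hF g' = homInr J hF (g ≫ g') := rfl

@[simp] theorem homInr_comp_homMix {b b' : {b : B // ¬ ∃ a, J.obj a = b}} {c : C}
    (g : (b.1 : B) ⟶ b'.1) (a : A) (e : F.obj a = c) (g' : (b'.1 : B) ⟶ J.obj a) :
    homInr J hF g ≫ homMix J hF a e g' = homMix J hF a e (g ≫ g') := rfl

theorem homMix_comp_homInl {b : {b : B // ¬ ∃ a, J.obj a = b}} {c c' : C} (a : A)
    (e : F.obj a = c) (g : (b.1 : B) ⟶ J.obj a) (k : c ⟶ c') (a' : A) (e' : F.obj a' = c')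
    (m : a ⟶ a') (hm : F.map m = (eqToHom e ≫ k) ≫ eqToHom e'.symm) :
    homMix J hF a e g ≫ homInl J hF k = homMix J hF a' e' (g ≫ J.map m) :=
  pComp_mixed J hF (⟨⟨a, e⟩, g⟩ : PHom J F (Sum.inr b) (Sum.inl c)) k a' e' m hm

theorem eqToHom_inl {c c' : C} (e : c = c') :
    (eqToHom (congrArg (pinl J hF) e) : pinl J hF c ⟶ Sum.inl c')
      = homInl J hF (eqToHom e) := by
  subst e; rfl

theorem eqToHom_inr {b b' : {b : B // ¬ ∃ a, J.obj a = b}} (e : b = b') :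
    (eqToHom (congrArg (pinr J hF) e) : pinr J hF b ⟶ Sum.inr b')
      = homInr J hF (eqToHom (congrArg Subtype.val e)) := by
  subst e; exact (homInr_id J hF).symm

theorem homMix_comp_eqToHom {b : {b : B // ¬ ∃ a, J.obj a = b}} {c c' : C} (a : A)
    (e : F.obj a = c) (g : (b.1 : B) ⟶ J.obj a) (e' : c = c') :
    homMix J hF a e g ≫ homInl J hF (eqToHom e') = homMix J hF a (e.trans e') g := by
  rw [homMix_comp_homInl J hF a e g (eqToHom e') a (e.trans e') (𝟙 a) (by simp)]
  simp

/-- The right leg of the explicit pushout cocone. -/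
noncomputable def jbarP : C ⥤ PCarrier J hF where
  obj c := Sum.inl c
  map k := homInl J hF k
  map_id _ := rfl
  map_comp _ _ := rfl

variable (hJ : IsCosieve J)

open scoped Classical in
/-- The object part of the left leg. -/
noncomputable def fObj (b : B) : PCarrier J hF :=
  if h : ∃ a, J.obj a = b then pinl J hF (F.obj h.choose) else pinr J hF ⟨b, h⟩

include hJ in
theorem fObj_inl {a : A} {b : B} (h : J.obj a = b) :
    fObj J hF b = pinl J hF (F.obj a) := by
  have hb : ∃ a', J.obj a' = b := ⟨a, h⟩
  rw [fObj, dif_pos hb]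
  exact congrArg (fun t => pinl J hF (F.obj t)) (hJ.2 (hb.choose_spec.trans h.symm))

theorem fObj_inr {b : B} (h : ¬ ∃ a, J.obj a = b) :
    fObj J hF b = pinr J hF ⟨b, h⟩ := dif_neg h

open scoped Classical in
/-- The map part of the left leg. -/
noncomputable def fMap {b b' : B} (g : b ⟶ b') : fObj J hF b ⟶ fObj J hF b' :=
  if hb : ∃ a, J.obj a = b then
    eqToHom (fObj_inl J hF hJ hb.choose_spec) ≫
      homInl J hF (F.map (olift hJ.1 hb.choose ⟨b', eqToHom hb.choose_spec ≫ g⟩).2) ≫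
      eqToHom (fObj_inl J hF hJ
        (olift_fst hJ.1 hb.choose ⟨b', eqToHom hb.choose_spec ≫ g⟩ : _ = b')).symm
  else if hb' : ∃ a, J.obj a = b' then
    eqToHom (fObj_inr J hF hb) ≫
      homMix J hF hb'.choose rfl (g ≫ eqToHom hb'.choose_spec.symm) ≫
      eqToHom (fObj_inl J hF hJ hb'.choose_spec).symm
  else
    eqToHom (fObj_inr J hF hb) ≫
      homInr J hF (g : (⟨b, hb⟩ : {b : B // ¬ ∃ a, J.obj a = b}).1 ⟶
        (⟨b', hb'⟩ : {b : B // ¬ ∃ a, J.obj a = b}).1) ≫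
      eqToHom (fObj_inr J hF hb').symm

theorem fMap_eq_inl {b b' : B} (g : b ⟶ b') (a : A) (h : J.obj a = b) :
    fMap J hF hJ g = eqToHom (fObj_inl J hF hJ h) ≫
      homInl J hF (F.map (olift hJ.1 a ⟨b', eqToHom h ≫ g⟩).2) ≫
      eqToHom (fObj_inl J hF hJ
        (olift_fst hJ.1 a ⟨b', eqToHom h ≫ g⟩ : _ = b')).symm := by
  have hb : ∃ a', J.obj a' = b := ⟨a, h⟩
  have e : hb.choose = a := hJ.2 (hb.choose_spec.trans h.symm)
  subst e
  rw [fMap, dif_pos hb]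

theorem fMap_eq_mix {b b' : B} (g : b ⟶ b') (hb : ¬ ∃ a, J.obj a = b) (a' : A)
    (h' : J.obj a' = b') :
    fMap J hF hJ g = eqToHom (fObj_inr J hF hb) ≫
      homMix J hF a' rfl (g ≫ eqToHom h'.symm) ≫
      eqToHom (fObj_inl J hF hJ h').symm := by
  have hb' : ∃ a, J.obj a = b' := ⟨a', h'⟩
  have e : hb'.choose = a' := hJ.2 (hb'.choose_spec.trans h'.symm)
  subst e
  rw [fMap, dif_neg hb, dif_pos hb']

theorem fMap_eq_inr {b b' : B} (g : b ⟶ b') (hb : ¬ ∃ a, J.obj a = b)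
    (hb' : ¬ ∃ a, J.obj a = b') :
    fMap J hF hJ g = eqToHom (fObj_inr J hF hb) ≫
      homInr J hF (g : (⟨b, hb⟩ : {b : B // ¬ ∃ a, J.obj a = b}).1 ⟶
        (⟨b', hb'⟩ : {b : B // ¬ ∃ a, J.obj a = b}).1) ≫
      eqToHom (fObj_inr J hF hb').symm := by
  rw [fMap, dif_neg hb, dif_neg hb']

theorem homMix_comp_homInl_assoc {b : {b : B // ¬ ∃ a, J.obj a = b}} {c c' : C} (a : A)
    (e : F.obj a = c) (g : (b.1 : B) ⟶ J.obj a) (k : c ⟶ c') (a' : A) (e' : F.obj a' = c')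
    (m : a ⟶ a') (hm : F.map m = (eqToHom e ≫ k) ≫ eqToHom e'.symm)
    {X : PCarrier J hF} (t : pinl J hF c' ⟶ X) :
    homMix J hF a e g ≫ homInl J hF k ≫ t = homMix J hF a' e' (g ≫ J.map m) ≫ t := by
  rw [← Category.assoc, homMix_comp_homInl J hF a e g k a' e' m hm]

@[simp] theorem homInl_comp_assoc {c c' c'' : C} (k : c ⟶ c') (k' : c' ⟶ c'')
    {X : PCarrier J hF} (t : pinl J hF c'' ⟶ X) :
    homInl J hF k ≫ homInl J hF k' ≫ t = homInl J hF (k ≫ k') ≫ t := by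
  rw [← Category.assoc]; rfl

@[simp] theorem homInr_comp_assoc {b b' b'' : {b : B // ¬ ∃ a, J.obj a = b}}
    (g : (b.1 : B) ⟶ b'.1) (g' : (b'.1 : B) ⟶ b''.1)
    {X : PCarrier J hF} (t : pinr J hF b'' ⟶ X) :
    homInr J hF g ≫ homInr J hF g' ≫ t = homInr J hF (g ≫ g') ≫ t := by
  rw [← Category.assoc]; rfl

@[simp] theorem homInr_comp_homMix_assoc {b b' : {b : B // ¬ ∃ a, J.obj a = b}} {c : C}
    (g : (b.1 : B) ⟶ b'.1) (a : A) (e : F.obj a = c) (g' : (b'.1 : B) ⟶ J.obj a)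
    {X : PCarrier J hF} (t : pinl J hF c ⟶ X) :
    homInr J hF g ≫ homMix J hF a e g' ≫ t = homMix J hF a e (g ≫ g') ≫ t := by
  rw [← Category.assoc]; rfl

@[simp] theorem homInl_id' (c : C) : homInl J hF (𝟙 c) = 𝟙 (pinl J hF c) := rfl

include hJ in
theorem package_eq {b : B} {a : A} (h1 : J.obj a = b) (u : Out (J.obj a)) (w' : Out a)
    (hu : mapOut J w' = u) :
    eqToHom (fObj_inl J hF hJ h1) ≫ homInl J hF (F.map (olift hJ.1 a u).2) ≫
      eqToHom (fObj_inl J hF hJ (olift_fst hJ.1 a u)).symm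
    = eqToHom (fObj_inl J hF hJ h1) ≫ homInl J hF (F.map w'.2) ≫
      eqToHom (fObj_inl J hF hJ (congrArg Sigma.fst hu : J.obj w'.1 = u.1)).symm := by
  have h : w' = olift hJ.1 a u := olift_eq hJ.1 hu
  subst h
  rfl

/-- The left leg of the explicit pushout cocone. -/
noncomputable def fbarP : B ⥤ PCarrier J hF where
  obj := fObj J hF
  map := fMap J hF hJ
  map_id b := by
    show fMap J hF hJ (𝟙 b) = 𝟙 (fObj J hF b)
    by_cases hb : ∃ a, J.obj a = b
    · obtain ⟨a, h⟩ := hb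
      rw [fMap_eq_inl J hF hJ (𝟙 b) a h]
      have hu : mapOut J (⟨a, 𝟙 a⟩ : Out a) = ⟨b, eqToHom h ≫ 𝟙 b⟩ :=
        mapOut_eq_iff.mpr ⟨h, by simp⟩
      rw [package_eq J hF hJ h _ _ hu]
      simp
    · rw [fMap_eq_inr J hF hJ (𝟙 b) hb hb]
      have : homInr J hF (b := ⟨b, hb⟩) (b' := ⟨b, hb⟩) (𝟙 b) = 𝟙 (pinr J hF ⟨b, hb⟩) := rfl
      rw [this]
      simp
  map_comp := by
    intro b b' b'' g g'
    show fMap J hF hJ (g ≫ g') = fMap J hF hJ g ≫ fMap J hF hJ g'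
    by_cases hb : ∃ a, J.obj a = b
    · obtain ⟨a, h⟩ := hb
      set w := olift hJ.1 a ⟨b', eqToHom h ≫ g⟩ with hw
      have h' : J.obj w.1 = b' := olift_fst hJ.1 a ⟨b', eqToHom h ≫ g⟩
      set v := olift hJ.1 w.1 ⟨b'', eqToHom h' ≫ g'⟩ with hv
      have h'' : J.obj v.1 = b'' := olift_fst hJ.1 w.1 ⟨b'', eqToHom h' ≫ g'⟩
      have hu : mapOut J (⟨v.1, w.2 ≫ v.2⟩ : Out a) = ⟨b'', eqToHom h ≫ (g ≫ g')⟩ := by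
        refine mapOut_eq_iff.mpr ⟨h'', ?_⟩
        erw [J.map_comp, olift_snd hJ.1, olift_snd hJ.1]
        simp
      rw [fMap_eq_inl J hF hJ (g ≫ g') a h, fMap_eq_inl J hF hJ g a h,
        fMap_eq_inl J hF hJ g' w.1 h', package_eq J hF hJ h _ _ hu]
      simp [F.map_comp]
      rfl
    · by_cases hb' : ∃ a, J.obj a = b'
      · obtain ⟨a', h'⟩ := hb'
        have h'' : J.obj (olift hJ.1 a' ⟨b'', eqToHom h' ≫ g'⟩).1 = b'' :=
          olift_fst hJ.1 a' ⟨b'', eqToHom h' ≫ g'⟩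
        rw [fMap_eq_mix J hF hJ (g ≫ g') hb _ h'', fMap_eq_mix J hF hJ g hb a' h',
          fMap_eq_inl J hF hJ g' a' h']
        simp only [Category.assoc, eqToHom_trans_assoc, eqToHom_refl, Category.id_comp]
        rw [homMix_comp_homInl_assoc J hF (b := ⟨b, hb⟩) a' rfl (g ≫ eqToHom h'.symm)
          (F.map (olift hJ.1 a' ⟨b'', eqToHom h' ≫ g'⟩).2)
          (olift hJ.1 a' ⟨b'', eqToHom h' ≫ g'⟩).1 rfl
          (olift hJ.1 a' ⟨b'', eqToHom h' ≫ g'⟩).2 (by simp)]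
        erw [show (g ≫ eqToHom h'.symm) ≫ J.map (olift hJ.1 a' ⟨b'', eqToHom h' ≫ g'⟩).2
            = g ≫ (g' ≫ eqToHom h''.symm) by erw [olift_snd hJ.1]; simp]
      · by_cases hb'' : ∃ a, J.obj a = b''
        · obtain ⟨a'', h''⟩ := hb''
          rw [fMap_eq_mix J hF hJ (g ≫ g') hb a'' h'', fMap_eq_inr J hF hJ g hb hb',
            fMap_eq_mix J hF hJ g' hb' a'' h'']
          simp only [Category.assoc, eqToHom_trans_assoc, eqToHom_refl, Category.id_comp]
          rw [homInr_comp_homMix_assoc]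
          try simp
        · rw [fMap_eq_inr J hF hJ (g ≫ g') hb hb'', fMap_eq_inr J hF hJ g hb hb',
            fMap_eq_inr J hF hJ g' hb' hb'']
          simp only [Category.assoc, eqToHom_trans_assoc, eqToHom_refl, Category.id_comp]
          rw [homInr_comp_assoc]

theorem square_commutes : J ⋙ fbarP J hF hJ = F ⋙ jbarP J hF := by
  refine CategoryTheory.Functor.ext (fun a => fObj_inl J hF hJ rfl) ?_
  intro a a' m
  show fMap J hF hJ (J.map m) = _
  rw [fMap_eq_inl J hF hJ (J.map m) a rfl]
  have hu : mapOut J (⟨a', m⟩ : Out a) = ⟨J.obj a', eqToHom rfl ≫ J.map m⟩ :=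
    mapOut_eq_iff.mpr ⟨rfl, by simp⟩
  rw [package_eq J hF hJ rfl _ _ hu]
  rfl

section Desc

variable {E : Type u} [Category.{u} E] (G : B ⥤ E) (H : C ⥤ E) (hcond : J ⋙ G = F ⋙ H)

/-- Object part of the functor induced by the universal property. -/
def descObj : PObj J F → E
  | Sum.inl c => H.obj c
  | Sum.inr b => G.obj b.1

/-- Morphism part of the functor induced by the universal property. -/
def descMap : ∀ {x y : PObj J F}, PHom J F x y → (descObj J G H x ⟶ descObj J G H y)
  | Sum.inl _, Sum.inl _, k => H.map k
  | Sum.inl _, Sum.inr _, k => PEmpty.elim k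
  | Sum.inr _, Sum.inr _, g => G.map g
  | Sum.inr _, Sum.inl _, m => G.map m.2 ≫
      eqToHom ((Functor.congr_obj hcond m.1.1).trans (congrArg H.obj m.1.2))

theorem descMap_comp : ∀ {x y z : PObj J F} (f : PHom J F x y) (g : PHom J F y z),
    descMap J G H hcond (pComp J hF f g)
      = descMap J G H hcond f ≫ descMap J G H hcond g := by
  rintro (c | b) (x | bx) (y | by') f g
  · exact H.map_comp f g
  · exact PEmpty.elim g
  · exact PEmpty.elim f
  · exact PEmpty.elim f
  · -- (r, l, l)
    set w := olift hF f.1.1 ⟨y, eqToHom f.1.2 ≫ g⟩ with hw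
    show G.map (f.2 ≫ J.map w.2) ≫
        eqToHom ((Functor.congr_obj hcond w.1).trans (congrArg H.obj (olift_fst hF f.1.1 _)))
      = (G.map f.2 ≫
          eqToHom ((Functor.congr_obj hcond f.1.1).trans (congrArg H.obj f.1.2))) ≫ H.map g
    have h1 := Functor.congr_hom hcond w.2
    have h2 : (J ⋙ G).map w.2 = G.map (J.map w.2) := rfl
    have h3 : (F ⋙ H).map w.2 = H.map (F.map w.2) := rfl
    rw [h2, h3] at h1
    erw [G.map_comp, h1, olift_snd hF]
    simp [eqToHom_map]
  · exact PEmpty.elim g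
  · -- (r, r, l)
    show G.map (f ≫ g.2) ≫
        eqToHom ((Functor.congr_obj hcond g.1.1).trans (congrArg H.obj g.1.2))
      = G.map f ≫ (G.map g.2 ≫
          eqToHom ((Functor.congr_obj hcond g.1.1).trans (congrArg H.obj g.1.2)))
    rw [G.map_comp, Category.assoc]
  · exact G.map_comp f g

/-- The functor induced by the universal property. -/
noncomputable def descFunctor : PCarrier J hF ⥤ E where
  obj := descObj J G H
  map := descMap J G H hcond
  map_id x := by
    show descMap J G H hcond (pId J F x) = 𝟙 (descObj J G H x)
    rcases x with c | b
    · exact H.map_id c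
    · exact G.map_id b.1
  map_comp f g := descMap_comp J hF G H hcond f g

theorem jbar_desc : jbarP J hF ⋙ descFunctor J hF G H hcond = H := by
  refine CategoryTheory.Functor.ext (fun c => rfl) ?_
  intro c c' k
  show descMap J G H hcond (homInl J hF k) = eqToHom _ ≫ H.map k ≫ eqToHom _
  rw [show descMap J G H hcond (homInl J hF k) = H.map k from rfl]
  erw [eqToHom_refl, eqToHom_refl, Category.id_comp, Category.comp_id]

theorem descMap_comp' {x y z : PCarrier J hF} (f : x ⟶ y) (g : y ⟶ z) :
    descMap J G H hcond (f ≫ g) = descMap J G H hcond f ≫ descMap J G H hcond g :=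
  descMap_comp J hF G H hcond f g

theorem descMap_eqToHom {x y : PCarrier J hF} (e : x = y) :
    descMap J G H hcond (eqToHom e) = eqToHom (congrArg (descObj J G H) e) := by
  subst e
  rw [eqToHom_refl, eqToHom_refl]
  rcases x with c | bb
  · exact H.map_id c
  · exact G.map_id bb.1

theorem fbar_desc : fbarP J hF hJ ⋙ descFunctor J hF G H hcond = G := by
  have hobj : ∀ b : B, descObj J G H (fObj J hF b) = G.obj b := by
    intro b
    by_cases hb : ∃ a, J.obj a = b
    · obtain ⟨a, h⟩ := hb
      rw [fObj_inl J hF hJ h]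
      exact ((Functor.congr_obj hcond a).symm.trans (congrArg G.obj h))
    · rw [fObj_inr J hF hb]
      rfl
  refine CategoryTheory.Functor.ext hobj ?_
  intro b b' g
  show descMap J G H hcond (fMap J hF hJ g) = eqToHom _ ≫ G.map g ≫ eqToHom _
  by_cases hb : ∃ a, J.obj a = b
  · obtain ⟨a, h⟩ := hb
    rw [fMap_eq_inl J hF hJ g a h, descMap_comp' J hF G H hcond,
      descMap_comp' J hF G H hcond, descMap_eqToHom J hF G H hcond,
      descMap_eqToHom J hF G H hcond]
    set w := olift hJ.1 a ⟨b', eqToHom h ≫ g⟩ with hw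
    rw [show descMap J G H hcond (homInl J hF (F.map w.2)) = H.map (F.map w.2) from rfl]
    have h1 := Functor.congr_hom hcond w.2
    have h2 : (J ⋙ G).map w.2 = G.map (J.map w.2) := rfl
    have h3 : (F ⋙ H).map w.2 = H.map (F.map w.2) := rfl
    rw [h2, h3] at h1
    have h5 : H.map (F.map w.2)
        = eqToHom (Functor.congr_obj hcond a).symm ≫ G.map (J.map w.2) ≫
          eqToHom (Functor.congr_obj hcond w.1) := by
      rw [h1]; simp
    rw [h5, show J.map w.2 = (eqToHom h ≫ g) ≫
      eqToHom (olift_fst hJ.1 a ⟨b', eqToHom h ≫ g⟩).symm from olift_snd hJ.1 a _]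
    simp [eqToHom_map]
    erw [Category.assoc, Category.assoc, eqToHom_trans_assoc, eqToHom_trans]
  · by_cases hb' : ∃ a, J.obj a = b'
    · obtain ⟨a', h'⟩ := hb'
      rw [fMap_eq_mix J hF hJ g hb a' h', descMap_comp' J hF G H hcond,
        descMap_comp' J hF G H hcond, descMap_eqToHom J hF G H hcond,
        descMap_eqToHom J hF G H hcond]
      rw [show descMap J G H hcond (homMix J hF (b := ⟨b, hb⟩) a' rfl (g ≫ eqToHom h'.symm))
          = G.map (g ≫ eqToHom h'.symm) ≫
            eqToHom ((Functor.congr_obj hcond a').trans (congrArg H.obj rfl)) from rfl]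
      simp [eqToHom_map]
      erw [Category.assoc, eqToHom_trans]
      rfl
    · rw [fMap_eq_inr J hF hJ g hb hb', descMap_comp' J hF G H hcond,
        descMap_comp' J hF G H hcond, descMap_eqToHom J hF G H hcond,
        descMap_eqToHom J hF G H hcond]
      rw [show descMap J G H hcond (homInr J hF (b := ⟨b, hb⟩) (b' := ⟨b', hb'⟩) g)
          = G.map g from rfl]
      try simp
      rfl

@[simp] theorem eqToHom_self {D : Type u} [Category.{u} D] {x : D} (h : x = x) :
    eqToHom h = 𝟙 x := rfl

theorem desc_unique (m : PCarrier J hF ⥤ E) (hm1 : fbarP J hF hJ ⋙ m = G)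
    (hm2 : jbarP J hF ⋙ m = H) : m = descFunctor J hF G H hcond := by
  have hobj : ∀ x : PCarrier J hF, m.obj x = descObj J G H x := by
    rintro (c | bb)
    · exact Functor.congr_obj hm2 c
    · have h1 : fObj J hF bb.1 = pinr J hF bb := fObj_inr J hF bb.2
      have : m.obj (fObj J hF bb.1) = G.obj bb.1 := Functor.congr_obj hm1 bb.1
      rw [h1] at this
      exact this
  have hmf : ∀ {b b' : B} (g : b ⟶ b'), m.map (fMap J hF hJ g)
      = eqToHom (Functor.congr_obj hm1 b) ≫ G.map g ≫
        eqToHom (Functor.congr_obj hm1 b').symm := fun g => Functor.congr_hom hm1 g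
  have hmj : ∀ {c c' : C} (k : c ⟶ c'), m.map (homInl J hF k)
      = eqToHom (Functor.congr_obj hm2 c) ≫ H.map k ≫
        eqToHom (Functor.congr_obj hm2 c').symm := fun k => Functor.congr_hom hm2 k
  refine CategoryTheory.Functor.ext hobj ?_
  intro x y f
  match x, y, f with
  | Sum.inl c, Sum.inl c', f =>
    show m.map f = eqToHom _ ≫ H.map (f : c ⟶ c') ≫ eqToHom _
    exact hmj (f : c ⟶ c')
  | Sum.inl c, Sum.inr bb', f => exact PEmpty.elim f
  | Sum.inr bb, Sum.inr bb', f =>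
    show m.map f = eqToHom _ ≫ G.map (f : bb.1 ⟶ bb'.1) ≫ eqToHom _
    have h3 := fMap_eq_inr J hF hJ (f : bb.1 ⟶ bb'.1) bb.2 bb'.2
    have h4 : f
        = eqToHom (fObj_inr J hF bb.2).symm ≫ fMap J hF hJ (f : bb.1 ⟶ bb'.1) ≫
          eqToHom (fObj_inr J hF bb'.2) := by
      rw [h3]
      simp only [Category.assoc, eqToHom_trans_assoc, eqToHom_trans, eqToHom_self,
        Category.id_comp, Category.comp_id]
      rfl
    conv_lhs => rw [h4]
    erw [m.map_comp, m.map_comp, eqToHom_map m, eqToHom_map m, hmf (f : bb.1 ⟶ bb'.1)]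
    simp
    erw [Category.assoc, Category.assoc, eqToHom_trans_assoc, eqToHom_trans]
  | Sum.inr bb, Sum.inl c', f =>
    show m.map f = eqToHom _ ≫ descMap J G H hcond f ≫ eqToHom _
    obtain ⟨⟨a, e⟩, g0⟩ := f
    subst e
    have h3 := fMap_eq_mix J hF hJ g0 bb.2 a rfl
    have h4 : (⟨⟨a, rfl⟩, g0⟩ : PHom J F (Sum.inr bb) (Sum.inl (F.obj a)))
        = eqToHom (fObj_inr J hF bb.2).symm ≫ fMap J hF hJ g0 ≫
          eqToHom (fObj_inl J hF hJ (rfl : J.obj a = J.obj a)) := by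
      rw [h3]
      simp only [Category.assoc, eqToHom_trans_assoc, eqToHom_trans, eqToHom_self,
        Category.id_comp, Category.comp_id]
      rfl
    conv_lhs => rw [h4]
    erw [m.map_comp, m.map_comp, eqToHom_map m, eqToHom_map m, hmf g0]
    have hdm : descMap (x := Sum.inr bb) (y := Sum.inl (F.obj a)) J G H hcond ⟨⟨a, rfl⟩, g0⟩
        = G.map g0 ≫ eqToHom ((Functor.congr_obj hcond a).trans
            (congrArg H.obj (rfl : F.obj a = F.obj a))) := rfl
    rw [hdm]
    simp
    erw [Category.assoc, Category.assoc, eqToHom_trans_assoc, eqToHom_trans, Category.assoc,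
      eqToHom_trans]
    rfl

end Desc

end Construction

section Dopf

theorem comp_dopf {X : Type u} [Category.{u} X] {Y : Type u} [Category.{u} Y] {Z : Type u}
    [Category.{u} Z] {P : X ⥤ Y} {Q : Y ⥤ Z} (hP : IsDiscreteOpfibration P)
    (hQ : IsDiscreteOpfibration Q) : IsDiscreteOpfibration (P ⋙ Q) := by
  intro x u
  obtain ⟨w, hw, hwu⟩ := hQ (P.obj x) u
  obtain ⟨v, hv, hvu⟩ := hP x w
  refine ⟨v, ?_, ?_⟩
  · show mapOut Q (mapOut P v) = u
    rw [hv, hw]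
  · intro v' hv'
    exact hvu v' (hwu (mapOut P v') hv')

theorem cancel_dopf {X : Type u} [Category.{u} X] {Y : Type u} [Category.{u} Y] {Z : Type u}
    [Category.{u} Z] {P : X ⥤ Y} {Q : Y ⥤ Z} (hPQ : IsDiscreteOpfibration (P ⋙ Q))
    (hQ : IsDiscreteOpfibration Q) : IsDiscreteOpfibration P := by
  intro x u
  obtain ⟨v, hv, hvu⟩ := hPQ x (mapOut Q u)
  refine ⟨v, ?_, ?_⟩
  · exact mapOut_injective hQ (show mapOut Q (mapOut P v) = mapOut Q u from hv)
  · intro v' hv'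
    exact hvu v' (show mapOut Q (mapOut P v') = mapOut Q u by rw [hv'])

theorem mapOut_congr {X : Type u} [Category.{u} X] {Y : Type u} [Category.{u} Y]
    {P Q : X ⥤ Y} (h : P = Q) {x : X} (u : Out x) :
    mapOut Q u = Out.cast (Functor.congr_obj h x) (mapOut P u) := by
  subst h; exact (Out.cast_rfl _).symm

theorem out_cast_self {X : Type u} [Category.{u} X] {x : X} (p : x = x) (u : Out x) :
    Out.cast p u = u := Out.cast_rfl u

theorem out_cast_eq_iff {X : Type u} [Category.{u} X] {x y : X} (e : x = y) (u : Out x)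
    (v : Out y) : Out.cast e u = v ↔ u = Out.cast e.symm v := by
  subst e; rw [out_cast_self, out_cast_self]

theorem out_eq_iff {X : Type u} [Category.{u} X] {x : X} {u v : Out x} :
    u = v ↔ ∃ e : u.1 = v.1, u.2 = v.2 ≫ eqToHom e.symm := by
  constructor
  · rintro rfl; exact ⟨rfl, by simp⟩
  · rintro ⟨e, h⟩
    obtain ⟨v1, v2⟩ := v
    dsimp at e; subst e
    exact out_ext rfl (heq_of_eq (by simpa using h))

theorem iso_dopf {D D' : Cat.{u, u}} (e : D ≅ D') :
    IsDiscreteOpfibration e.hom.toFunctor := by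
  have h1 : e.hom.toFunctor ⋙ e.inv.toFunctor = 𝟭 ↥D := congrArg Cat.Hom.toFunctor e.hom_inv_id
  have h2 : e.inv.toFunctor ⋙ e.hom.toFunctor = 𝟭 ↥D' := congrArg Cat.Hom.toFunctor e.inv_hom_id
  intro X u
  have hx : e.inv.toFunctor.obj (e.hom.toFunctor.obj X) = X := Functor.congr_obj h1 X
  refine ⟨Out.cast hx (mapOut e.inv.toFunctor u), ?_, ?_⟩
  · beta_reduce
    rw [mapOut_cast]
    have h3 := mapOut_congr h2 u
    have h4 : mapOut (𝟭 ↥D') u = u := rfl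
    have h5 : mapOut (e.inv.toFunctor ⋙ e.hom.toFunctor) u
        = mapOut e.hom.toFunctor (mapOut e.inv.toFunctor u) := rfl
    rw [h4, h5] at h3
    exact h3.symm
  · intro v' hv'
    beta_reduce at hv'
    subst hv'
    have h6 := mapOut_congr h1 v'
    have h7 : mapOut (𝟭 ↥D) v' = v' := rfl
    have h8 : mapOut (e.hom.toFunctor ⋙ e.inv.toFunctor) v'
        = mapOut e.inv.toFunctor (mapOut e.hom.toFunctor v') := rfl
    rw [h7, h8] at h6
    exact h6

end Dopf

section Main

variable {A : Type u} [Category.{u} A] {B : Type u} [Category.{u} B] {C : Type u}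
  [Category.{u} C]
variable (J : A ⥤ B) {F : A ⥤ C} (hF : IsDiscreteOpfibration F) (hJ : IsCosieve J)

theorem eqToHom_pinl {c c' : C} (p : pinl J hF c = pinl J hF c') :
    eqToHom p = homInl J hF (eqToHom (Sum.inl.inj p)) := by
  have hcc : c = c' := Sum.inl.inj p
  subst hcc
  simp [eqToHom_self]

theorem jbarP_dopf : IsDiscreteOpfibration (jbarP J hF) := by
  intro c u
  obtain ⟨y, mu⟩ := u
  rcases y with c' | bb'
  · refine ⟨⟨c', (mu : c ⟶ c')⟩, rfl, ?_⟩
    intro v' hv'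
    obtain ⟨t, n⟩ := v'
    obtain ⟨e1, h2⟩ := out_eq_iff.mp hv'
    have e2 : t = c' := Sum.inl.inj e1
    subst e2
    refine out_ext rfl (heq_of_eq ?_)
    show homInl J hF n = mu
    have h2x : homInl J hF n = mu ≫ eqToHom e1.symm := h2
    exact h2x.trans (Category.comp_id mu)
  · exact PEmpty.elim mu

include hJ in
theorem fbar_mapOut {a : A} (w : Out a) :
    mapOut (fbarP J hF hJ) (mapOut J w)
      = Out.cast (fObj_inl J hF hJ (rfl : J.obj a = J.obj a)).symm
          (mapOut (jbarP J hF) (mapOut F w)) := by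
  have h3 := mapOut_congr (square_commutes J hF hJ) w
  have h4 : mapOut (F ⋙ jbarP J hF) w = mapOut (jbarP J hF) (mapOut F w) := rfl
  have h5 : mapOut (J ⋙ fbarP J hF hJ) w = mapOut (fbarP J hF hJ) (mapOut J w) := rfl
  rw [h4, h5] at h3
  erw [h3, Out.cast_cast, out_cast_self]

theorem fbarP_dopf : IsDiscreteOpfibration (fbarP J hF hJ) := by
  intro b u
  by_cases hb : ∃ a, J.obj a = b
  · obtain ⟨a, rfl⟩ := hb
    have e : fObj J hF (J.obj a) = pinl J hF (F.obj a) :=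
      fObj_inl J hF hJ (rfl : J.obj a = J.obj a)
    obtain ⟨w, hw, hwu⟩ : ∃! w : Out a, mapOut (F ⋙ jbarP J hF) w = Out.cast e u :=
      comp_dopf hF (jbarP_dopf J hF) a (Out.cast e u)
    refine ⟨mapOut J w, ?_, ?_⟩
    · beta_reduce
      erw [fbar_mapOut J hF hJ w,
        show mapOut (jbarP J hF) (mapOut F w) = mapOut (F ⋙ jbarP J hF) w from rfl, hw,
        Out.cast_cast, out_cast_self]
    · intro v' hv'
      beta_reduce at hv'
      obtain ⟨w', rfl⟩ : ∃ w' : Out a, mapOut J w' = v' :=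
        ⟨olift hJ.1 a v', olift_spec hJ.1 a v'⟩
      have hkey : mapOut (F ⋙ jbarP J hF) w' = Out.cast e u := by
        have h6 := fbar_mapOut J hF hJ w'
        rw [hv'] at h6
        exact (out_cast_eq_iff _ _ _).mp h6.symm
      exact congrArg (mapOut J) (hwu w' hkey)
  · have e : fObj J hF b = Sum.inr ⟨b, hb⟩ := fObj_inr J hF hb
    obtain ⟨y, mu⟩ := u
    rcases y with c' | bb'
    · -- mixed target
      obtain ⟨⟨⟨a, e2⟩, g0⟩, hm0⟩ :
          ∃ p : PHom J F (Sum.inr ⟨b, hb⟩) (Sum.inl c'), eqToHom e.symm ≫ mu = p := ⟨_, rfl⟩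
      subst e2
      have hmu : mu = eqToHom e ≫
          (⟨⟨a, rfl⟩, g0⟩ : PHom J F (Sum.inr ⟨b, hb⟩) (Sum.inl (F.obj a))) := by
        rw [← hm0]
        erw [eqToHom_trans_assoc, eqToHom_refl, Category.id_comp]
      refine ⟨⟨J.obj a, g0⟩, ?_, ?_⟩
      · beta_reduce
        erw [out_eq_iff]
        refine ⟨(fObj_inl J hF hJ (rfl : J.obj a = J.obj a) :
          fObj J hF (J.obj a) = Sum.inl (F.obj a)), ?_⟩
        show fMap J hF hJ g0 = _
        rw [hmu, fMap_eq_mix J hF hJ g0 hb a rfl]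
        simp only [eqToHom_self, Category.comp_id, Category.id_comp, Category.assoc]
        erw [Category.assoc]
        rfl
      · intro v' hv'
        beta_reduce at hv'
        obtain ⟨t, n⟩ := v'
        have e1 : fObj J hF t = Sum.inl (F.obj a) := congrArg Sigma.fst hv'
        by_cases ht : ∃ a', J.obj a' = t
        case neg => exact absurd ((fObj_inr J hF ht).symm.trans e1) (fun hh => Sum.inr_ne_inl hh)
        obtain ⟨a_t, h_t⟩ := ht
        subst h_t
        obtain ⟨e1', h2⟩ := out_eq_iff.mp hv'
        have h2a : fMap J hF hJ n = mu ≫ eqToHom e1'.symm := h2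
        rw [hmu] at h2a
        have h2' : fMap J hF hJ n = eqToHom e ≫
            ((⟨⟨a, rfl⟩, g0⟩ : PHom J F (Sum.inr ⟨b, hb⟩) (Sum.inl (F.obj a))) ≫
              eqToHom e1'.symm) := by
          rw [h2a]; exact Category.assoc _ _ _
        rw [fMap_eq_mix J hF hJ n hb a_t rfl] at h2'
        have h3 := congrArg (fun z => eqToHom e.symm ≫ z ≫
          eqToHom (fObj_inl J hF hJ (rfl : J.obj a_t = J.obj a_t))) h2'
        simp only [Category.assoc, eqToHom_trans_assoc, eqToHom_trans, eqToHom_self,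
          Category.id_comp, Category.comp_id] at h3
        erw [eqToHom_trans_assoc, eqToHom_refl, Category.id_comp, Category.assoc,
          eqToHom_trans_assoc, eqToHom_refl, Category.id_comp, Category.assoc, eqToHom_trans] at h3
        erw [eqToHom_pinl J hF] at h3
        have h4 := h3.trans (homMix_comp_eqToHom J hF (b := ⟨b, hb⟩) a rfl g0 _)
        have ha : a_t = a := by
          have := congrArg (fun z : PHom J F (Sum.inr (⟨b, hb⟩ : {b : B // ¬ ∃ a, J.obj a = b}))
            (Sum.inl (F.obj a_t)) => z.1.1) h4
          exact this
        subst ha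
        have hn : n = g0 := eq_of_heq (Sigma.mk.inj_iff.mp h4).2
        subst hn
        rfl
    · -- inr target
      obtain ⟨g, hg⟩ : ∃ g : PHom J F (Sum.inr ⟨b, hb⟩) (Sum.inr bb'),
          eqToHom e.symm ≫ mu = g := ⟨_, rfl⟩
      have hmu : mu = eqToHom e ≫ g := by rw [← hg]; erw [eqToHom_trans_assoc, eqToHom_refl, Category.id_comp]
      refine ⟨⟨bb'.1, (g : b ⟶ bb'.1)⟩, ?_, ?_⟩
      · beta_reduce
        erw [out_eq_iff]
        refine ⟨(fObj_inr J hF bb'.2 : fObj J hF bb'.1 = Sum.inr bb'), ?_⟩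
        show fMap J hF hJ (g : b ⟶ bb'.1) = _
        rw [hmu, fMap_eq_inr J hF hJ (g : b ⟶ bb'.1) hb bb'.2]
        simp only [Category.assoc]
        erw [Category.assoc]
        rfl
      · intro v' hv'
        beta_reduce at hv'
        obtain ⟨t, n⟩ := v'
        have e1 : fObj J hF t = Sum.inr bb' := congrArg Sigma.fst hv'
        by_cases ht : ∃ a', J.obj a' = t
        case pos =>
          obtain ⟨a_t, h_t⟩ := ht
          exact absurd ((fObj_inl J hF hJ h_t).symm.trans e1) (fun hh => Sum.inl_ne_inr hh)
        have e2 : (⟨t, ht⟩ : {b : B // ¬ ∃ a, J.obj a = b}) = bb' :=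
          Sum.inr.inj ((fObj_inr J hF ht).symm.trans e1)
        subst e2
        obtain ⟨e1', h2⟩ := out_eq_iff.mp hv'
        have h2a : fMap J hF hJ n = mu ≫ eqToHom e1'.symm := h2
        rw [hmu, fMap_eq_inr J hF hJ n hb ht] at h2a
        have hh := heq_of_eq h2a
        erw [eqToHom_comp_heq_iff, comp_eqToHom_heq_iff, heq_comp_eqToHom_iff,
          heq_eqToHom_comp_iff] at hh
        have hn : n = (g : b ⟶ t) := eq_of_heq hh
        subst hn
        rfl

end Main

section CatLevel

variable {A B C : Cat.{u, u}} (J : A ⟶ B) {F : A ⟶ C}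
variable (hF : IsDiscreteOpfibration F.toFunctor) (hJ : IsCosieve J.toFunctor)

/-- The explicit pushout cocone in `Cat`. -/
noncomputable def catCocone : PushoutCocone J F :=
  PushoutCocone.mk (W := DP J.toFunctor hF) (fbarP J.toFunctor hF hJ).toCatHom
    (jbarP J.toFunctor hF).toCatHom
    (congrArg Functor.toCatHom (square_commutes J.toFunctor hF hJ))

/-- The explicit pushout cocone is a colimit. -/
noncomputable def catIsColimit : IsColimit (catCocone J hF hJ) :=
  PushoutCocone.IsColimit.mk (congrArg Functor.toCatHom (square_commutes J.toFunctor hF hJ))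
    (fun s => (descFunctor J.toFunctor hF s.inl.toFunctor s.inr.toFunctor
      (congrArg Cat.Hom.toFunctor s.condition)).toCatHom)
    (fun s => Cat.Hom.ext (fbar_desc J.toFunctor hF hJ s.inl.toFunctor s.inr.toFunctor
      (congrArg Cat.Hom.toFunctor s.condition)))
    (fun s => Cat.Hom.ext (jbar_desc J.toFunctor hF s.inl.toFunctor s.inr.toFunctor
      (congrArg Cat.Hom.toFunctor s.condition)))
    (fun s m h1 h2 => Cat.Hom.ext (desc_unique J.toFunctor hF hJ s.inl.toFunctor s.inr.toFunctor
      (congrArg Cat.Hom.toFunctor s.condition) m.toFunctor (congrArg Cat.Hom.toFunctor h1)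
      (congrArg Cat.Hom.toFunctor h2)))

end CatLevel

end PushoutAux

/-- In any pushout square in `Cat` with sides `J : A ⟶ B` a
cosieve, `F : A ⟶ C` a discrete opfibration, and injections `Fbar : B ⟶ D`,
`Jbar : C ⟶ D`, the pushout `Fbar` of `F` along the cosieve `J` is again a
discrete opfibration. -/
theorem pushout_of_discreteOpfibration_along_cosieve (A B C D : Cat.{u, u})
    (J : A ⟶ B) (F : A ⟶ C) (Fbar : B ⟶ D) (Jbar : C ⟶ D)
    (hJ : IsCosieve J.toFunctor) (hF : IsDiscreteOpfibration F.toFunctor)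
    (hpo : IsPushout J F Fbar Jbar) :
    IsDiscreteOpfibration Fbar.toFunctor := by
  have h1 : Fbar.toFunctor ⋙ (IsColimit.coconePointUniqueUpToIso hpo.isColimit
        (PushoutAux.catIsColimit J hF hJ)).hom.toFunctor = PushoutAux.fbarP J.toFunctor hF hJ :=
    congrArg Cat.Hom.toFunctor (IsColimit.comp_coconePointUniqueUpToIso_hom hpo.isColimit
      (PushoutAux.catIsColimit J hF hJ) WalkingSpan.left)
  have h2 : IsDiscreteOpfibration (Fbar.toFunctor ⋙
      (IsColimit.coconePointUniqueUpToIso hpo.isColimit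
        (PushoutAux.catIsColimit J hF hJ)).hom.toFunctor) := by
    rw [h1]
    exact PushoutAux.fbarP_dopf J.toFunctor hF hJ
  exact PushoutAux.cancel_dopf h2 (PushoutAux.iso_dopf
    (IsColimit.coconePointUniqueUpToIso hpo.isColimit (PushoutAux.catIsColimit J hF hJ)))
end
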